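/- arXiv:1011.0246 — 5 statements merged into one kernel-verified Lean document; each statement's English description precedes it below -/
import Mathlib

section
/- Let n ≥ 1 and let C be a real 2×n matrix with |C_{ki}| ≤ 1 for all k ∈ {1,2} and i = 1, …, n. There exist a real number x and a real symmetric n×n matrix B with unit diagonal such that the (n+2)×(n+2) block matrix Γ = [[A, C],[Cᵀ, B]], with A = [[1, x],[x, 1]], is positive semidefinite, if and only if for all i, j ∈ {1, …, n}, each of the four inequalities obtained by placing a single minus sign on one of the four terms holds: |arcsin(C_{1i}) + arcsin(C_{2i}) + arcsin(C_{1j}) − arcsin(C_{2j})| ≤ π, |arcsin(C_{1i}) + arcsin(C_{2i}) − arcsin(C_{1j}) + arcsin(C_{2j})| ≤ π, |arcsin(C_{1i}) − arcsin(C_{2i}) + arcsin(C_{1j}) + arcsin(C_{2j})| ≤ π, and |−arcsin(C_{1i}) + arcsin(C_{2i}) + arcsin(C_{1j}) + arcsin(C_{2j})| ≤ π. -/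
set_option maxHeartbeats 1000000

open Matrix Real

private lemma psd_det_nonneg' {m : Type*} [Fintype m] [DecidableEq m]
    {M : Matrix m m ℝ} (h : M.PosSemidef) : 0 ≤ M.det := by
  rw [h.isHermitian.det_eq_prod_eigenvalues]
  exact Finset.prod_nonneg fun i _ => by exact_mod_cast h.eigenvalues_nonneg i

private lemma core' {a b θ : ℝ} (ha1 : -1 ≤ a) (ha2 : a ≤ 1) (hb1 : -1 ≤ b) (hb2 : b ≤ 1)
    (hθ0 : 0 ≤ θ) (hθπ : θ ≤ π) :
    0 ≤ 1 + 2*a*b*Real.cos θ - a^2 - b^2 - Real.cos θ^2 ↔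
      (|Real.arccos a - Real.arccos b| ≤ θ ∧ θ ≤ Real.arccos a + Real.arccos b ∧
        θ ≤ 2*π - Real.arccos a - Real.arccos b) := by
  set α := Real.arccos a with hαd
  set β := Real.arccos b with hβd
  have hca : Real.cos α = a := Real.cos_arccos ha1 ha2
  have hcb : Real.cos β = b := Real.cos_arccos hb1 hb2
  have hα0 : 0 ≤ α := Real.arccos_nonneg a
  have hαπ : α ≤ π := Real.arccos_le_pi a
  have hβ0 : 0 ≤ β := Real.arccos_nonneg b
  have hβπ : β ≤ π := Real.arccos_le_pi b
  have hsa : 0 ≤ Real.sin α := Real.sin_nonneg_of_nonneg_of_le_pi hα0 hαπ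
  have hsb : 0 ≤ Real.sin β := Real.sin_nonneg_of_nonneg_of_le_pi hβ0 hβπ
  have hsa2 : Real.sin α ^ 2 = 1 - a^2 := by rw [Real.sin_sq, hca]
  have hsb2 : Real.sin β ^ 2 = 1 - b^2 := by rw [Real.sin_sq, hcb]
  have key : (0 ≤ 1 + 2*a*b*Real.cos θ - a^2 - b^2 - Real.cos θ^2) ↔
      (Real.cos (α+β) ≤ Real.cos θ ∧ Real.cos θ ≤ Real.cos (α - β)) := by
    rw [Real.cos_add, Real.cos_sub, hca, hcb]
    constructor
    · intro h
      have hss : 0 ≤ Real.sin α * Real.sin β := mul_nonneg hsa hsb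
      constructor <;>
        nlinarith [sq_nonneg (Real.cos θ - a*b + Real.sin α * Real.sin β),
          sq_nonneg (Real.cos θ - a*b - Real.sin α * Real.sin β), hss]
    · rintro ⟨h1, h2⟩
      nlinarith [hsa2, hsb2]
  have key2 : Real.cos θ ≤ Real.cos (α - β) ↔ |α - β| ≤ θ := by
    rw [← Real.cos_abs (α - β)]
    exact Real.strictAntiOn_cos.le_iff_ge ⟨hθ0, hθπ⟩
      ⟨abs_nonneg _, abs_le.mpr ⟨by linarith, by linarith⟩⟩
  have key3 : Real.cos (α+β) ≤ Real.cos θ ↔ (θ ≤ α + β ∧ θ ≤ 2*π - α - β) := by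
    rcases le_or_gt (α + β) π with h | h
    · have h2 : Real.cos (α+β) ≤ Real.cos θ ↔ θ ≤ α + β :=
        Real.strictAntiOn_cos.le_iff_ge ⟨by linarith, h⟩ ⟨hθ0, hθπ⟩
      rw [h2]
      constructor
      · intro h3; exact ⟨h3, by linarith⟩
      · rintro ⟨h3, _⟩; exact h3
    · have hc2 : Real.cos (α+β) = Real.cos (2*π - (α+β)) := (Real.cos_two_pi_sub _).symm
      rw [hc2]
      have h2 : Real.cos (2*π - (α+β)) ≤ Real.cos θ ↔ θ ≤ 2*π - (α+β) :=
        Real.strictAntiOn_cos.le_iff_ge ⟨by linarith, by linarith⟩ ⟨hθ0, hθπ⟩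
      rw [h2]
      constructor
      · intro h3; exact ⟨by linarith, by linarith⟩
      · rintro ⟨_, h3⟩; linarith
  rw [key, key2, key3]
  tauto

/-- Theorem 1 of the paper: the partial matrix `Γ = [[A, C],[Cᵀ, B]]` with
`A = [[1,x],[x,1]]` and `B` symmetric with unit diagonal can be completed to a
positive semidefinite matrix iff the four arcsine inequalities hold for all
pairs of columns `i, j`. -/
theorem stmt_1 (n : ℕ) (hn : 1 ≤ n) (C : Matrix (Fin 2) (Fin n) ℝ)
    (hC : ∀ (k : Fin 2) (i : Fin n), |C k i| ≤ 1) :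
    (∃ (x : ℝ) (B : Matrix (Fin n) (Fin n) ℝ), B.IsSymm ∧ (∀ j, B j j = 1) ∧
      (Matrix.fromBlocks !![(1 : ℝ), x; x, 1] C Cᵀ B).PosSemidef) ↔
    (∀ i j : Fin n,
      |Real.arcsin (C 0 i) + Real.arcsin (C 1 i) + Real.arcsin (C 0 j)
        - Real.arcsin (C 1 j)| ≤ Real.pi ∧
      |Real.arcsin (C 0 i) + Real.arcsin (C 1 i) - Real.arcsin (C 0 j)
        + Real.arcsin (C 1 j)| ≤ Real.pi ∧
      |Real.arcsin (C 0 i) - Real.arcsin (C 1 i) + Real.arcsin (C 0 j)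
        + Real.arcsin (C 1 j)| ≤ Real.pi ∧
      |-Real.arcsin (C 0 i) + Real.arcsin (C 1 i) + Real.arcsin (C 0 j)
        + Real.arcsin (C 1 j)| ≤ Real.pi) := by
  have hC01 : ∀ i, -1 ≤ C 0 i ∧ C 0 i ≤ 1 := fun i => abs_le.mp (hC 0 i)
  have hC11 : ∀ i, -1 ≤ C 1 i ∧ C 1 i ≤ 1 := fun i => abs_le.mp (hC 1 i)
  set α : Fin n → ℝ := fun i => Real.arccos (C 0 i) with hαdef
  set β : Fin n → ℝ := fun i => Real.arccos (C 1 i) with hβdef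
  have hα0 : ∀ i, 0 ≤ α i := fun i => Real.arccos_nonneg _
  have hαπ : ∀ i, α i ≤ π := fun i => Real.arccos_le_pi _
  have hβ0 : ∀ i, 0 ≤ β i := fun i => Real.arccos_nonneg _
  have hβπ : ∀ i, β i ≤ π := fun i => Real.arccos_le_pi _
  have hcα : ∀ i, Real.cos (α i) = C 0 i := fun i => Real.cos_arccos (hC01 i).1 (hC01 i).2
  have hcβ : ∀ i, Real.cos (β i) = C 1 i := fun i => Real.cos_arccos (hC11 i).1 (hC11 i).2
  have harcsin : ∀ (k : Fin 2) i, Real.arcsin (C k i) = π/2 - Real.arccos (C k i) :=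
    fun k i => Real.arcsin_eq_pi_div_two_sub_arccos _
  constructor
  · rintro ⟨x, B, hBsym, hBdiag, hPSD⟩
    have hx2 : x^2 ≤ 1 := by
      have h := psd_det_nonneg' (hPSD.submatrix ![Sum.inl 0, Sum.inl 1])
      rw [Matrix.det_fin_two] at h
      simp [Matrix.submatrix_apply] at h
      nlinarith [h]
    have hx1 : -1 ≤ x := by nlinarith
    have hx1' : x ≤ 1 := by nlinarith
    set θ := Real.arccos x with hθdef
    have hcθ : Real.cos θ = x := Real.cos_arccos hx1 hx1'
    have hθ0 : 0 ≤ θ := Real.arccos_nonneg x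
    have hθπ : θ ≤ π := Real.arccos_le_pi x
    have hdet : ∀ k : Fin n,
        0 ≤ 1 + 2*(C 0 k)*(C 1 k)*Real.cos θ - (C 0 k)^2 - (C 1 k)^2 - Real.cos θ^2 := by
      intro k
      have h := psd_det_nonneg' (hPSD.submatrix ![Sum.inl 0, Sum.inl 1, Sum.inr k])
      rw [Matrix.det_fin_three] at h
      simp [Matrix.submatrix_apply, hBdiag, Matrix.transpose_apply] at h
      rw [hcθ]
      nlinarith [h]
    have main : ∀ k : Fin n, |α k - β k| ≤ θ ∧ θ ≤ α k + β k ∧ θ ≤ 2*π - α k - β k :=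
      fun k => (core' (hC01 k).1 (hC01 k).2 (hC11 k).1 (hC11 k).2 hθ0 hθπ).mp (hdet k)
    intro i j
    obtain ⟨hi1, hi2, hi3⟩ := main i
    obtain ⟨hj1, hj2, hj3⟩ := main j
    have hai := le_abs_self (α i - β i)
    have hai' := neg_abs_le (α i - β i)
    have haj := le_abs_self (α j - β j)
    have haj' := neg_abs_le (α j - β j)
    simp only [harcsin]
    refine ⟨abs_le.mpr ⟨by linarith, by linarith⟩, abs_le.mpr ⟨by linarith, by linarith⟩,
      abs_le.mpr ⟨by linarith, by linarith⟩, abs_le.mpr ⟨by linarith, by linarith⟩⟩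
  · intro h
    have hP : ∀ i j : Fin n, |α i - β i| ≤ α j + β j ∧ |α i - β i| ≤ 2*π - α j - β j := by
      intro i j
      obtain ⟨h1, h2, h3, h4⟩ := h i j
      simp only [harcsin] at h1 h2 h3 h4
      obtain ⟨h3a, h3b⟩ := abs_le.mp h3
      obtain ⟨h4a, h4b⟩ := abs_le.mp h4
      exact ⟨abs_le.mpr ⟨by linarith, by linarith⟩, abs_le.mpr ⟨by linarith, by linarith⟩⟩
    haveI : Nonempty (Fin n) := ⟨⟨0, hn⟩⟩
    set θ : ℝ := (Finset.univ : Finset (Fin n)).sup' Finset.univ_nonempty (fun i => |α i - β i|) with hθdef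
    have hθ_ge : ∀ i, |α i - β i| ≤ θ := by
      intro i; rw [hθdef]; exact Finset.le_sup' (fun i : Fin n => |α i - β i|) (Finset.mem_univ i)
    have hθ_le1 : ∀ j, θ ≤ α j + β j := by
      intro j; rw [hθdef]; exact Finset.sup'_le _ _ fun i _ => (hP i j).1
    have hθ_le2 : ∀ j, θ ≤ 2*π - α j - β j := by
      intro j; rw [hθdef]; exact Finset.sup'_le _ _ fun i _ => (hP i j).2
    have hθ0 : 0 ≤ θ := le_trans (abs_nonneg _) (hθ_ge ⟨0, hn⟩)
    have hθπ : θ ≤ π := by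
      rw [hθdef]
      exact Finset.sup'_le _ _ fun i _ =>
        abs_le.mpr ⟨by have := hα0 i; have := hαπ i; have := hβ0 i; have := hβπ i; linarith,
          by have := hα0 i; have := hαπ i; have := hβ0 i; have := hβπ i; linarith⟩
    have hdet : ∀ k : Fin n,
        0 ≤ 1 + 2*(C 0 k)*(C 1 k)*Real.cos θ - (C 0 k)^2 - (C 1 k)^2 - Real.cos θ^2 :=
      fun k => (core' (hC01 k).1 (hC01 k).2 (hC11 k).1 (hC11 k).2 hθ0 hθπ).mpr
        ⟨hθ_ge k, hθ_le1 k, hθ_le2 k⟩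
    set q : Fin n → ℝ := fun i =>
      if Real.sin θ = 0 then (if θ = 0 then 0 else Real.sqrt (1 - (C 0 i)^2))
      else (C 1 i - C 0 i * Real.cos θ) / Real.sin θ with hqdef
    have hsinθ : 0 ≤ Real.sin θ := Real.sin_nonneg_of_nonneg_of_le_pi hθ0 hθπ
    have hsinsq : Real.sin θ ^ 2 = 1 - Real.cos θ ^ 2 := Real.sin_sq θ
    have hpi_cases : Real.sin θ = 0 → θ ≠ 0 → θ = π := by
      intro hs h0
      by_contra hne
      have : 0 < Real.sin θ := Real.sin_pos_of_pos_of_lt_pi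
        (lt_of_le_of_ne hθ0 (Ne.symm h0)) (lt_of_le_of_ne hθπ hne)
      linarith
    have habeq : θ = 0 → ∀ i, C 0 i = C 1 i := by
      intro h0 i
      have h1 : |α i - β i| ≤ 0 := h0 ▸ hθ_ge i
      have heq : α i = β i := by
        have := abs_nonneg (α i - β i)
        have := abs_eq_zero.mp (le_antisymm h1 this)
        linarith
      rw [← hcα i, ← hcβ i, heq]
    have hbneg : θ = π → ∀ i, C 1 i = -(C 0 i) := by
      intro hπ i
      have h1 := hθ_le1 i; have h2 := hθ_le2 i
      rw [hπ] at h1 h2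
      have hsum : β i = π - α i := by linarith
      rw [← hcα i, ← hcβ i, hsum, Real.cos_pi_sub]
    have hq1 : ∀ i, C 0 i * Real.cos θ + q i * Real.sin θ = C 1 i := by
      intro i
      by_cases hs : Real.sin θ = 0
      · by_cases h0 : θ = 0
        · rw [hqdef]; simp only [if_pos hs, if_pos h0]
          rw [hs, h0, Real.cos_zero]
          rw [habeq h0 i]; ring
        · have hπ := hpi_cases hs h0
          rw [hqdef]; simp only [if_pos hs, if_neg h0]
          rw [hs, hπ, Real.cos_pi, hbneg hπ i]
          ring
      · rw [hqdef]; simp only [if_neg hs]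
        field_simp
        ring
    have hq2 : ∀ i, (C 0 i)^2 + (q i)^2 ≤ 1 := by
      intro i
      by_cases hs : Real.sin θ = 0
      · by_cases h0 : θ = 0
        · rw [hqdef]; simp only [if_pos hs, if_pos h0]
          nlinarith [(hC01 i).1, (hC01 i).2]
        · rw [hqdef]; simp only [if_pos hs, if_neg h0]
          rw [Real.sq_sqrt (by nlinarith [(hC01 i).1, (hC01 i).2] : (0:ℝ) ≤ 1 - (C 0 i)^2)]
          linarith
      · have hs2 : 0 < Real.sin θ ^ 2 := by positivity
        have key : (C 1 i - C 0 i * Real.cos θ)^2 ≤ (1 - (C 0 i)^2) * Real.sin θ^2 := by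
          nlinarith [hdet i, hsinsq]
        have h3 : (C 1 i - C 0 i * Real.cos θ)^2 / Real.sin θ^2 ≤ 1 - (C 0 i)^2 := by
          rw [div_le_iff₀ hs2]; nlinarith [key]
        rw [hqdef]; simp only [if_neg hs]
        rw [div_pow]
        linarith
    set c : Fin n → ℝ := fun i => Real.sqrt (1 - (C 0 i)^2 - (q i)^2) with hcdef
    have hcc : ∀ i, c i * c i = 1 - (C 0 i)^2 - (q i)^2 := by
      intro i
      rw [hcdef]
      exact Real.mul_self_sqrt (by linarith [hq2 i])
    set B : Matrix (Fin n) (Fin n) ℝ := Matrix.of fun i j =>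
      C 0 i * C 0 j + q i * q j + (if i = j then c i * c j else 0) with hBdef
    refine ⟨Real.cos θ, B, ?_, ?_, ?_⟩
    · rw [Matrix.IsSymm]
      ext i j
      rw [Matrix.transpose_apply, hBdef]
      simp only [Matrix.of_apply]
      rcases eq_or_ne i j with rfl | hne
      · ring
      · rw [if_neg hne, if_neg (Ne.symm hne)]
        ring
    · intro j
      show C 0 j * C 0 j + q j * q j + (if j = j then c j * c j else 0) = 1
      rw [if_pos rfl, hcc j]
      ring
    · set M : Matrix (Fin 2 ⊕ Fin n) (Fin 2 ⊕ Fin n) ℝ := fun r k =>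
        Sum.elim
          (fun r2 => Sum.elim (fun k2 => !![1, Real.cos θ; 0, Real.sin θ] r2 k2)
            (fun i => ![C 0 i, q i] r2) k)
          (fun rn => Sum.elim (fun _ => (0:ℝ)) (fun i => if rn = i then c i else 0) k) r
        with hMdef
      have hMM : Matrix.fromBlocks !![(1:ℝ), Real.cos θ; Real.cos θ, 1] C Cᵀ B = Mᴴ * M := by
        ext k l
        rcases k with k | k <;> rcases l with l | l <;>
          simp only [Matrix.mul_apply, Matrix.conjTranspose_apply, star_trivial] <;>
          simp only [Matrix.mul_apply, Matrix.conjTranspose_apply, star_trivial,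
            Fintype.sum_sum_type, Fin.sum_univ_two, hMdef, Sum.elim_inl, Sum.elim_inr,
            Matrix.fromBlocks_apply₁₁, Matrix.fromBlocks_apply₁₂,
            Matrix.fromBlocks_apply₂₁, Matrix.fromBlocks_apply₂₂]
        · fin_cases k <;> fin_cases l <;>
            simp [Matrix.cons_val_zero, Matrix.cons_val_one, Matrix.head_cons] <;>
            nlinarith [Real.sin_sq_add_cos_sq θ]
        · fin_cases k <;>
            simp [Matrix.cons_val_zero, Matrix.cons_val_one, Matrix.head_cons]
          · exact (hq1 l) ▸ by linarith [hq1 l]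
        · fin_cases l <;>
            simp [Matrix.transpose_apply, Matrix.cons_val_zero, Matrix.cons_val_one,
              Matrix.head_cons]
          · linarith [hq1 k]
        · simp only [mul_ite, ite_mul, mul_zero, zero_mul, Finset.sum_ite_eq,
            Finset.mem_univ, if_true, hBdef, Matrix.of_apply]
          rw [Finset.sum_ite_eq' Finset.univ l (fun x => if x = k then c k * c l else 0)]
          simp only [Finset.mem_univ, if_true, Matrix.cons_val_zero, Matrix.cons_val_one,
            Matrix.head_cons]
          rcases eq_or_ne k l with rfl | hne
          · simp
          · rw [if_neg hne, if_neg (Ne.symm hne)]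
      rw [hMM]
      exact Matrix.posSemidef_conjTranspose_mul_self M
end

section
/- Let n ≥ 1, let x ∈ (−1, 1), and let C be a real 2×n matrix such that 1 − x² − C_{1i}² − C_{2i}² + 2x·C_{1i}·C_{2i} ≥ 0 for every i = 1, …, n. Let A = [[1, x],[x, 1]] and define the n×n matrix B by B_{ii} = 1 and B_{ij} = (CᵀA⁻¹C)_{ij} for i ≠ j. Then the (n+2)×(n+2) block matrix Γ = [[A, C],[Cᵀ, B]] is positive semidefinite. -/
open Matrix

/-- If `|x| < 1` and `1 - x² - C₁ᵢ² - C₂ᵢ² + 2x C₁ᵢ C₂ᵢ ≥ 0` for all `i`, then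
completing `B` with off-diagonal entries `(Cᵀ A⁻¹ C)_{ij}` and unit diagonal
yields a positive semidefinite block matrix `[[A, C],[Cᵀ, B]]`. -/
theorem stmt_8 (n : ℕ) (hn : 1 ≤ n) (x : ℝ) (hx : x ∈ Set.Ioo (-1 : ℝ) 1)
    (C : Matrix (Fin 2) (Fin n) ℝ)
    (hC : ∀ i, 1 - x ^ 2 - (C 0 i) ^ 2 - (C 1 i) ^ 2
      + 2 * x * C 0 i * C 1 i ≥ 0)
    (B : Matrix (Fin n) (Fin n) ℝ)
    (hB : ∀ i j, B i j =
      if i = j then 1 else (Cᵀ * (!![(1 : ℝ), x; x, 1])⁻¹ * C) i j) :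
    (Matrix.fromBlocks !![(1 : ℝ), x; x, 1] C Cᵀ B).PosSemidef := by
  obtain ⟨hx1, hx2⟩ := hx
  set A : Matrix (Fin 2) (Fin 2) ℝ := !![(1:ℝ), x; x, 1] with hAdef
  have hdetpos : 0 < 1 - x^2 := by nlinarith
  have hdet : A.det = 1 - x^2 := by simp [hAdef, Matrix.det_fin_two_of]; ring
  have hA : A.PosDef := by
    refine Matrix.PosDef.of_dotProduct_mulVec_pos ?_ ?_
    · ext i j; fin_cases i <;> fin_cases j <;> simp [hAdef]
    · intro v hv
      have h2 : v 0 ≠ 0 ∨ v 1 ≠ 0 := by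
        by_contra h; push_neg at h
        exact hv (funext fun i => by fin_cases i <;> simp [h.1, h.2])
      have hexpr : star v ⬝ᵥ A *ᵥ v = v 0 ^2 + v 1^2 + 2*x*(v 0)*(v 1) := by
        simp [hAdef, Matrix.mulVec, dotProduct, Fin.sum_univ_two]; ring
      rw [hexpr]
      rcases h2 with h | h <;> rcases le_or_gt 0 x with hxs | hxs <;>
        nlinarith [mul_pos (show (0:ℝ) < 1 - x by linarith) (sq_pos_of_ne_zero h),
          mul_pos (show (0:ℝ) < 1 + x by linarith) (sq_pos_of_ne_zero h),
          mul_nonneg (show (0:ℝ) ≤ 1 - x by linarith) (sq_nonneg (v 0)),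
          mul_nonneg (show (0:ℝ) ≤ 1 - x by linarith) (sq_nonneg (v 1)),
          mul_nonneg (show (0:ℝ) ≤ 1 + x by linarith) (sq_nonneg (v 0)),
          mul_nonneg (show (0:ℝ) ≤ 1 + x by linarith) (sq_nonneg (v 1)),
          sq_nonneg (v 0 + v 1), sq_nonneg (v 0 - v 1), hxs]
  have hInv : Invertible A :=
    A.invertibleOfIsUnitDet (by rw [hdet]; exact (isUnit_iff_ne_zero.mpr hdetpos.ne'))
  have hCT : Cᴴ = Cᵀ := rfl
  have hAinv : A⁻¹ = (1 - x^2)⁻¹ • !![(1:ℝ), -x; -x, 1] := by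
    rw [Matrix.inv_def, hdet, hAdef, Matrix.adjugate_fin_two,
      Ring.inverse_eq_inv]
    norm_num
  have hschur : (B - Cᴴ * A⁻¹ * C).PosSemidef := by
    have hd : B - Cᴴ * A⁻¹ * C
        = Matrix.diagonal (fun i => 1 - (Cᵀ * A⁻¹ * C) i i) := by
      ext i j
      by_cases hij : i = j
      · subst hij; simp [hB i i, hCT]
      · simp [hB i j, hij, hCT, Matrix.diagonal_apply_ne _ hij]
    rw [hd]
    refine Matrix.posSemidef_diagonal_iff.mpr fun i => ?_
    have hval : (Cᵀ * A⁻¹ * C) i i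
        = (1-x^2)⁻¹ * (C 0 i^2 + C 1 i^2 - 2*x*C 0 i*C 1 i) := by
      simp [hAinv, Matrix.mul_apply, Fin.sum_univ_two, Matrix.smul_apply]
      ring
    rw [hval, sub_nonneg, inv_mul_eq_div, div_le_one hdetpos]
    linarith [hC i]
  have := (Matrix.PosDef.fromBlocks₁₁ C B hA).mpr hschur
  rwa [hCT] at this
end

section
/- Let ρ ∈ (−1, 1) and let f : ℝ² → ℝ be the bivariate Gaussian density f(a, b) = (2π√(1 − ρ²))⁻¹ · exp(−(a² − 2ρab + b²)/(2(1 − ρ²))). Then ∫∫_{ℝ²} sgn(a)·sgn(b)·f(a, b) da db = (2/π)·arcsin(ρ). -/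
open Real MeasureTheory Set intervalIntegral Filter Topology

lemma aux_measurable_sign : Measurable Real.sign := by
  unfold Real.sign
  exact Measurable.ite (measurableSet_lt measurable_id measurable_const) measurable_const
    (Measurable.ite (measurableSet_lt measurable_const measurable_id) measurable_const
      measurable_const)

lemma aux_sign_pos_mul {r : ℝ} (hr : 0 < r) (x : ℝ) : Real.sign (r * x) = Real.sign x := by
  rcases lt_trichotomy x 0 with h | rfl | h
  · rw [Real.sign_of_neg h, Real.sign_of_neg (mul_neg_of_pos_of_neg hr h)]
  · simp
  · rw [Real.sign_of_pos h, Real.sign_of_pos (mul_pos hr h)]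

lemma aux_beta_pos {ρ : ℝ} (hρ : ρ ∈ Set.Ioo (-1:ℝ) 1) (θ : ℝ) :
    0 < 1 - 2 * ρ * Real.cos θ * Real.sin θ := by
  obtain ⟨h1, h2⟩ := hρ
  have hu1 : -1 ≤ Real.sin (2*θ) := Real.neg_one_le_sin _
  have hu2 : Real.sin (2*θ) ≤ 1 := Real.sin_le_one _
  rw [Real.sin_two_mul] at hu1 hu2
  nlinarith [sq_nonneg (ρ - 2 * Real.sin θ * Real.cos θ), sq_nonneg (ρ + 2 * Real.sin θ * Real.cos θ),
    mul_nonneg (by linarith : (0:ℝ) ≤ 1 - 2 * Real.sin θ * Real.cos θ)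
      (by linarith : (0:ℝ) ≤ 1 + 2 * Real.sin θ * Real.cos θ)]

lemma aux_gauss {b : ℝ} (hb : 0 < b) :
    ∫ r in Ioi (0:ℝ), r * Real.exp (-b * r^2) = (2*b)⁻¹ := by
  have A : ∀ x ∈ Ici (0:ℝ), HasDerivAt (fun y => -(2*b)⁻¹ * Real.exp (-b*y^2))
      (x * Real.exp (-b*x^2)) x := by
    intro x _
    have h1 : HasDerivAt (fun y : ℝ => -b*y^2) (-b*(2*x)) x := by
      simpa using ((hasDerivAt_pow 2 x).const_mul (-b))
    have := (h1.exp).const_mul (-(2*b)⁻¹)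
    refine this.congr_deriv (Eq.symm ?_)
    field_simp
  have hlim : Tendsto (fun y : ℝ => -(2*b)⁻¹ * Real.exp (-b*y^2)) atTop (𝓝 0) := by
    have h0 : Tendsto (fun y : ℝ => -b*y^2) atTop atBot := by
      apply Filter.Tendsto.const_mul_atTop_of_neg (by linarith : -b < 0)
      exact tendsto_pow_atTop (by norm_num)
    have h2 := (Real.tendsto_exp_atBot).comp h0
    have h3 := h2.const_mul (-(2*b)⁻¹)
    simpa using h3
  rw [integral_Ioi_of_hasDerivAt_of_tendsto' A
    ((integrable_mul_exp_neg_mul_sq hb).integrableOn) hlim]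
  norm_num

lemma aux_J {ρ : ℝ} (hρ : ρ ∈ Set.Ioo (-1:ℝ) 1) :
    ∫ θ in (0:ℝ)..(π/2), (1 - 2*ρ*Real.cos θ*Real.sin θ)⁻¹
      = (π/2 + Real.arcsin ρ) / Real.sqrt (1-ρ^2) := by
  have h2 : (0:ℝ) < 1 - ρ^2 := by nlinarith [hρ.1, hρ.2]
  set s : ℝ := Real.sqrt (1-ρ^2) with hs_def
  have hs : 0 < s := Real.sqrt_pos.mpr h2
  have hs2 : s^2 = 1 - ρ^2 := Real.sq_sqrt h2.le
  set F : ℝ → ℝ := fun θ => s⁻¹ * Real.arctan ((Real.tan θ - ρ)/s) with hF_def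
  have hcont : Continuous fun θ : ℝ => (1 - 2*ρ*Real.cos θ*Real.sin θ)⁻¹ := by
    apply Continuous.inv₀
    · continuity
    · intro θ; exact (aux_beta_pos hρ θ).ne'
  have hderiv : ∀ θ ∈ Ioo (0:ℝ) (π/2), HasDerivAt F ((1 - 2*ρ*Real.cos θ*Real.sin θ)⁻¹) θ := by
    intro θ hθ
    have hc : 0 < Real.cos θ :=
      Real.cos_pos_of_mem_Ioo ⟨by linarith [hθ.1, Real.pi_pos], hθ.2⟩
    have htan : HasDerivAt Real.tan (1 / Real.cos θ ^ 2) θ := Real.hasDerivAt_tan hc.ne'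
    have h1 : HasDerivAt (fun θ => (Real.tan θ - ρ)/s) ((1 / Real.cos θ ^ 2)/s) θ :=
      (htan.sub_const ρ).div_const s
    have h3 := ((Real.hasDerivAt_arctan ((Real.tan θ - ρ)/s)).comp θ h1).const_mul s⁻¹
    refine h3.congr_deriv (Eq.symm ?_)
    have hβ := aux_beta_pos hρ θ
    have hkey : (Real.cos θ)^2 * (s^2 + (Real.tan θ - ρ)^2) = 1 - 2*ρ*Real.cos θ*Real.sin θ := by
      have : Real.tan θ = Real.sin θ / Real.cos θ := Real.tan_eq_sin_div_cos θ
      rw [this, hs2]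
      field_simp
      nlinarith [Real.sin_sq_add_cos_sq θ]
    rw [← hkey]
    rw [eq_comm]
    field_simp
  have hint : IntervalIntegrable (fun θ => (1 - 2*ρ*Real.cos θ*Real.sin θ)⁻¹) volume 0 (π/2) :=
    hcont.intervalIntegrable _ _
  have ha : Tendsto F (𝓝[>] (0:ℝ)) (𝓝 (s⁻¹ * Real.arctan ((0 - ρ)/s))) := by
    have : ContinuousAt F 0 := by
      apply ContinuousAt.mul continuousAt_const
      apply Real.continuous_arctan.continuousAt.comp
      apply ContinuousAt.div_const
      exact (Real.continuousAt_tan.mpr (by simp)).sub continuousAt_const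
    simpa [F, Real.tan_zero] using this.continuousWithinAt.tendsto
  have hb : Tendsto F (𝓝[<] (π/2)) (𝓝 (s⁻¹ * (π/2))) := by
    have h1 : Tendsto (fun θ => (Real.tan θ - ρ)/s) (𝓝[<] (π/2)) atTop := by
      apply Tendsto.atTop_div_const hs
      exact tendsto_atTop_add_const_right _ _ Real.tendsto_tan_pi_div_two
    have h2 := (Real.tendsto_arctan_atTop.mono_right nhdsWithin_le_nhds).comp h1
    exact (h2.const_mul s⁻¹)
  rw [integral_eq_sub_of_hasDerivAt_of_tendsto (by positivity) hderiv hint ha hb]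
  have harc : Real.arctan (ρ/s) = Real.arcsin ρ := (Real.arcsin_eq_arctan hρ).symm
  rw [show ((0:ℝ) - ρ)/s = -(ρ/s) by ring, Real.arctan_neg, harc]
  field_simp
  ring

lemma aux_abs_sign_le (x : ℝ) : |Real.sign x| ≤ 1 := by
  rcases Real.sign_apply_eq x with h | h | h <;> rw [h] <;> norm_num

lemma aux_intable {ρ : ℝ} (hρ : ρ ∈ Set.Ioo (-1:ℝ) 1) (a b : ℝ) :
    IntervalIntegrable
      (fun θ => Real.sign (Real.cos θ) * Real.sign (Real.sin θ) *
        (1 - 2*ρ*Real.cos θ*Real.sin θ)⁻¹) volume a b := by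
  have hb1 : |ρ| < 1 := abs_lt.mpr ⟨hρ.1, hρ.2⟩
  have hbpos : (0:ℝ) < 1 - |ρ| := by linarith
  rw [intervalIntegrable_iff]
  apply MeasureTheory.Integrable.mono' (g := fun _ => (1 - |ρ|)⁻¹)
  · exact integrableOn_const measure_Ioc_lt_top.ne
  · exact (((aux_measurable_sign.comp Real.continuous_cos.measurable).mul
      (aux_measurable_sign.comp Real.continuous_sin.measurable)).mul
      ((Real.continuous_cos.measurable.const_mul _ |>.mul
        Real.continuous_sin.measurable).const_sub 1).inv).aestronglyMeasurable
  · filter_upwards with θ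
    have hβ := aux_beta_pos hρ θ
    have hge : 1 - |ρ| ≤ 1 - 2*ρ*Real.cos θ*Real.sin θ := by
      have hu1 : -1 ≤ Real.sin (2*θ) := Real.neg_one_le_sin _
      have hu2 : Real.sin (2*θ) ≤ 1 := Real.sin_le_one _
      rw [Real.sin_two_mul] at hu1 hu2
      rcases abs_cases ρ with ⟨h, _⟩ | ⟨h, _⟩ <;> nlinarith
    have h1 : (1 - 2*ρ*Real.cos θ*Real.sin θ)⁻¹ ≤ (1 - |ρ|)⁻¹ :=
      inv_anti₀ hbpos hge
    calc ‖Real.sign (Real.cos θ) * Real.sign (Real.sin θ) *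
          (1 - 2*ρ*Real.cos θ*Real.sin θ)⁻¹‖
        = |Real.sign (Real.cos θ)| * |Real.sign (Real.sin θ)| *
          |(1 - 2*ρ*Real.cos θ*Real.sin θ)⁻¹| := by
          rw [Real.norm_eq_abs, abs_mul, abs_mul]
      _ ≤ 1 * 1 * (1 - |ρ|)⁻¹ := by
          apply mul_le_mul _ _ (abs_nonneg _) (by norm_num)
          · exact mul_le_mul (aux_abs_sign_le _) (aux_abs_sign_le _) (abs_nonneg _) (by norm_num)
          · rw [abs_of_pos (inv_pos.mpr hβ)]; exact h1
      _ = (1 - |ρ|)⁻¹ := by ring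

lemma aux_A {ρ : ℝ} (hρ : ρ ∈ Set.Ioo (-1:ℝ) 1) :
    ∫ θ in Ioo (-π) π, Real.sign (Real.cos θ) * Real.sign (Real.sin θ) *
      (1 - 2*ρ*Real.cos θ*Real.sin θ)⁻¹
    = 4 * Real.arcsin ρ / Real.sqrt (1-ρ^2) := by
  have hπ := Real.pi_pos
  set h : ℝ → ℝ := fun θ => Real.sign (Real.cos θ) * Real.sign (Real.sin θ) *
      (1 - 2*ρ*Real.cos θ*Real.sin θ)⁻¹ with hh
  set g : ℝ → ℝ := fun θ => (1 - 2*ρ*Real.cos θ*Real.sin θ)⁻¹ with hg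
  set g' : ℝ → ℝ := fun θ => (1 - 2*(-ρ)*Real.cos θ*Real.sin θ)⁻¹ with hg'
  have hρ' : -ρ ∈ Set.Ioo (-1:ℝ) 1 := ⟨by linarith [hρ.2], by linarith [hρ.1]⟩
  -- convert to interval integral
  have e0 : ∫ θ in Ioo (-π) π, h θ = ∫ θ in (-π)..π, h θ := by
    rw [intervalIntegral.integral_of_le (by linarith), integral_Ioc_eq_integral_Ioo]
  rw [e0]
  -- split into four pieces
  have i1 := aux_intable hρ (-π) (-(π/2))
  have i2 := aux_intable hρ (-(π/2)) 0
  have i3 := aux_intable hρ 0 (π/2)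
  have i4 := aux_intable hρ (π/2) π
  have esplit : ∫ θ in (-π)..π, h θ =
      (∫ θ in (-π)..(-(π/2)), h θ) + (∫ θ in (-(π/2))..0, h θ)
      + (∫ θ in (0:ℝ)..(π/2), h θ) + (∫ θ in (π/2)..π, h θ) := by
    rw [← intervalIntegral.integral_add_adjacent_intervals (i1.trans i2) (i3.trans i4),
      ← intervalIntegral.integral_add_adjacent_intervals i1 i2,
      ← intervalIntegral.integral_add_adjacent_intervals i3 i4]
    ring
  rw [esplit]
  -- piece 3
  have e3 : ∫ θ in (0:ℝ)..(π/2), h θ = ∫ θ in (0:ℝ)..(π/2), g θ := by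
    rw [intervalIntegral.integral_of_le (by linarith),
      intervalIntegral.integral_of_le (by linarith),
      integral_Ioc_eq_integral_Ioo, integral_Ioc_eq_integral_Ioo]
    apply setIntegral_congr_fun measurableSet_Ioo
    intro θ hθ
    have hc : 0 < Real.cos θ := Real.cos_pos_of_mem_Ioo ⟨by linarith [hθ.1], hθ.2⟩
    have hsn : 0 < Real.sin θ := Real.sin_pos_of_pos_of_lt_pi hθ.1 (by linarith [hθ.2])
    simp [h, g, Real.sign_of_pos hc, Real.sign_of_pos hsn]
  -- piece 4
  have e4 : ∫ θ in (π/2)..π, h θ = -∫ θ in (0:ℝ)..(π/2), g' θ := by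
    have c1 : ∫ θ in (π/2)..π, h θ = ∫ θ in (π/2)..π, -g θ := by
      rw [intervalIntegral.integral_of_le (by linarith),
        intervalIntegral.integral_of_le (by linarith),
        integral_Ioc_eq_integral_Ioo, integral_Ioc_eq_integral_Ioo]
      apply setIntegral_congr_fun measurableSet_Ioo
      intro θ hθ
      have hc : Real.cos θ < 0 := Real.cos_neg_of_pi_div_two_lt_of_lt hθ.1 (by linarith [hθ.2])
      have hsn : 0 < Real.sin θ := Real.sin_pos_of_pos_of_lt_pi (by linarith [hθ.1]) hθ.2
      simp [h, g, Real.sign_of_neg hc, Real.sign_of_pos hsn]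
    have c2 : ∫ θ in (0:ℝ)..(π/2), g' θ = ∫ θ in (π/2)..π, g θ := by
      have := intervalIntegral.integral_comp_sub_left (a := 0) (b := π/2) g π
      rw [show π - π/2 = π/2 by ring, show π - 0 = π by ring] at this
      rw [← this]
      apply intervalIntegral.integral_congr
      intro θ _
      simp only [g, g', Real.cos_pi_sub, Real.sin_pi_sub]
      ring_nf
    rw [c1, intervalIntegral.integral_neg, c2]
  -- piece 2
  have e2 : ∫ θ in (-(π/2))..0, h θ = -∫ θ in (0:ℝ)..(π/2), g' θ := by
    have c1 : ∫ θ in (-(π/2))..0, h θ = ∫ θ in (-(π/2))..0, -g θ := by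
      rw [intervalIntegral.integral_of_le (by linarith),
        intervalIntegral.integral_of_le (by linarith),
        integral_Ioc_eq_integral_Ioo, integral_Ioc_eq_integral_Ioo]
      apply setIntegral_congr_fun measurableSet_Ioo
      intro θ hθ
      have hc : 0 < Real.cos θ := Real.cos_pos_of_mem_Ioo ⟨hθ.1, by linarith [hθ.2]⟩
      have hsn : Real.sin θ < 0 := Real.sin_neg_of_neg_of_neg_pi_lt hθ.2 (by linarith [hθ.1])
      simp [h, g, Real.sign_of_pos hc, Real.sign_of_neg hsn]
    have c2 : ∫ θ in (0:ℝ)..(π/2), g' θ = ∫ θ in (-(π/2))..0, g θ := by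
      have := intervalIntegral.integral_comp_neg (a := 0) (b := π/2) g
      rw [neg_zero] at this
      rw [← this]
      apply intervalIntegral.integral_congr
      intro θ _
      simp only [g, g', Real.cos_neg, Real.sin_neg]
      ring_nf
    rw [c1, intervalIntegral.integral_neg, c2]
  -- piece 1
  have e1 : ∫ θ in (-π)..(-(π/2)), h θ = ∫ θ in (0:ℝ)..(π/2), g θ := by
    have c1 : ∫ θ in (-π)..(-(π/2)), h θ = ∫ θ in (-π)..(-(π/2)), g θ := by
      rw [intervalIntegral.integral_of_le (by linarith),
        intervalIntegral.integral_of_le (by linarith),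
        integral_Ioc_eq_integral_Ioo, integral_Ioc_eq_integral_Ioo]
      apply setIntegral_congr_fun measurableSet_Ioo
      intro θ hθ
      have hc : Real.cos θ < 0 := by
        rw [← Real.cos_neg]
        exact Real.cos_neg_of_pi_div_two_lt_of_lt (by linarith [hθ.2]) (by linarith [hθ.1])
      have hsn : Real.sin θ < 0 := Real.sin_neg_of_neg_of_neg_pi_lt (by linarith [hθ.2]) hθ.1
      simp [h, g, Real.sign_of_neg hc, Real.sign_of_neg hsn]
    have c2 : ∫ θ in (0:ℝ)..(π/2), g θ = ∫ θ in (-π)..(-(π/2)), g θ := by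
      have := intervalIntegral.integral_comp_sub_right (a := 0) (b := π/2) g π
      rw [show (0:ℝ) - π = -π by ring, show π/2 - π = -(π/2) by ring] at this
      rw [← this]
      apply intervalIntegral.integral_congr
      intro θ _
      simp only [g, Real.cos_sub_pi, Real.sin_sub_pi]
      ring_nf
    rw [c1, c2]
  rw [e1, e2, e3, e4]
  have hJ := aux_J hρ
  have hJ' := aux_J hρ'
  rw [show ((-ρ:ℝ))^2 = ρ^2 by ring, Real.arcsin_neg] at hJ'
  rw [hJ, hJ']
  have h2 : (0:ℝ) < 1 - ρ^2 := by nlinarith [hρ.1, hρ.2]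
  have hs : 0 < Real.sqrt (1-ρ^2) := Real.sqrt_pos.mpr h2
  field_simp
  ring

/-- For the centered bivariate Gaussian density with unit variances and
correlation `ρ`, the expectation of `sgn(a)·sgn(b)` equals `(2/π)·arcsin ρ`. -/
theorem stmt_9 (ρ : ℝ) (hρ : ρ ∈ Set.Ioo (-1 : ℝ) 1) (f : ℝ → ℝ → ℝ)
    (hf : ∀ a b, f a b = (2 * Real.pi * Real.sqrt (1 - ρ ^ 2))⁻¹ *
      Real.exp (-(a ^ 2 - 2 * ρ * a * b + b ^ 2) / (2 * (1 - ρ ^ 2)))) :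
    ∫ p : ℝ × ℝ, Real.sign p.1 * Real.sign p.2 * f p.1 p.2 =
      (2 / Real.pi) * Real.arcsin ρ := by
  have h2 : (0:ℝ) < 1 - ρ^2 := by nlinarith [hρ.1, hρ.2]
  have hπ := Real.pi_pos
  set s : ℝ := Real.sqrt (1-ρ^2) with hs_def
  have hs : 0 < s := Real.sqrt_pos.mpr h2
  have hs2 : s^2 = 1 - ρ^2 := Real.sq_sqrt h2.le
  set c : ℝ := 2*(1-ρ^2) with hc_def
  have hc : 0 < c := by positivity
  set G : ℝ × ℝ → ℝ := fun p => p.1 *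
      Real.exp (-((1 - 2*ρ*Real.cos p.2*Real.sin p.2)/c) * p.1^2) *
      ((2*π*s)⁻¹ * (Real.sign (Real.cos p.2) * Real.sign (Real.sin p.2))) with hG
  rw [← integral_comp_polarCoord_symm (fun p : ℝ × ℝ => Real.sign p.1 * Real.sign p.2 * f p.1 p.2)]
  have htarget : polarCoord.target = Ioi (0:ℝ) ×ˢ Ioo (-π) π := rfl
  have e1 : ∫ p in polarCoord.target,
      p.1 • (Real.sign (polarCoord.symm p).1 * Real.sign (polarCoord.symm p).2 *
        f (polarCoord.symm p).1 (polarCoord.symm p).2)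
      = ∫ p in Ioi (0:ℝ) ×ˢ Ioo (-π) π, G p := by
    rw [htarget]
    apply setIntegral_congr_fun (measurableSet_Ioi.prod measurableSet_Ioo)
    rintro ⟨r, θ⟩ ⟨hr, hθ⟩
    have hsymm : polarCoord.symm (r, θ) = (r * Real.cos θ, r * Real.sin θ) := rfl
    simp only [hsymm, smul_eq_mul, hG]
    rw [hf, aux_sign_pos_mul hr, aux_sign_pos_mul hr]
    have hexp : -((r * Real.cos θ)^2 - 2*ρ*(r * Real.cos θ)*(r * Real.sin θ)
        + (r * Real.sin θ)^2) / c = -((1 - 2*ρ*Real.cos θ*Real.sin θ)/c) * r^2 := by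
      rw [div_eq_iff hc.ne']
      field_simp
      linear_combination (-r^2) * Real.sin_sq_add_cos_sq θ
    rw [hexp]
    ring
  rw [e1]
  -- integrability of G on the product
  have h1ρ : (0:ℝ) < 1 - |ρ| := by
    have : |ρ| < 1 := abs_lt.mpr ⟨hρ.1, hρ.2⟩
    linarith
  have hb0 : (0:ℝ) < (1 - |ρ|)/c := div_pos h1ρ hc
  have hbeta_ge : ∀ θ, 1 - |ρ| ≤ 1 - 2*ρ*Real.cos θ*Real.sin θ := by
    intro θ
    have hu1 : -1 ≤ Real.sin (2*θ) := Real.neg_one_le_sin _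
    have hu2 : Real.sin (2*θ) ≤ 1 := Real.sin_le_one _
    rw [Real.sin_two_mul] at hu1 hu2
    rcases abs_cases ρ with ⟨h, _⟩ | ⟨h, _⟩ <;> nlinarith
  have hmG : Measurable G := by
    apply Measurable.mul
    · apply Measurable.mul measurable_fst
      exact (Real.continuous_exp.measurable.comp
        ((((measurable_const.sub (((measurable_const.mul
          (Real.continuous_cos.measurable.comp measurable_snd)).mul
          (Real.continuous_sin.measurable.comp measurable_snd)))).div_const c).neg).mul
          ((measurable_fst.pow measurable_const))))
    · exact measurable_const.mul
        ((aux_measurable_sign.comp (Real.continuous_cos.measurable.comp measurable_snd)).mul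
         (aux_measurable_sign.comp (Real.continuous_sin.measurable.comp measurable_snd)))
  have hint : Integrable G
      ((volume.restrict (Ioi (0:ℝ))).prod (volume.restrict (Ioo (-π) π))) := by
    have base := ((integrable_mul_exp_neg_mul_sq hb0).abs.const_mul ((2*π*s)⁻¹))
    have hcongr : (fun x : ℝ => (2*π*s)⁻¹ * |x * Real.exp (-((1-|ρ|)/c) * x^2)|)
        =ᵐ[volume] fun r : ℝ => (2*π*s)⁻¹ * (|r| * Real.exp (-((1-|ρ|)/c) * r^2)) := by
      filter_upwards with x
      rw [abs_mul, Real.abs_exp]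
    have hφ : Integrable (fun r : ℝ => (2*π*s)⁻¹ * (|r| * Real.exp (-((1-|ρ|)/c) * r^2)))
        (volume.restrict (Ioi (0:ℝ))) := (base.congr hcongr).restrict
    have hψ : Integrable (fun _ : ℝ => (1:ℝ)) (volume.restrict (Ioo (-π) π)) :=
      integrableOn_const measure_Ioo_lt_top.ne
    apply Integrable.mono' (hφ.mul_prod hψ) (hmG.aestronglyMeasurable)
    filter_upwards with p
    have hβ := aux_beta_pos hρ p.2
    have hA : |p.1 * Real.exp (-((1 - 2*ρ*Real.cos p.2*Real.sin p.2)/c) * p.1^2)|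
        ≤ |p.1| * Real.exp (-((1-|ρ|)/c) * p.1^2) := by
      rw [abs_mul, Real.abs_exp]
      apply mul_le_mul_of_nonneg_left (Real.exp_le_exp.mpr ?_) (abs_nonneg _)
      have hdd : (1-|ρ|)/c ≤ (1 - 2*ρ*Real.cos p.2*Real.sin p.2)/c := by
        gcongr
        linarith [hbeta_ge p.2]
      nlinarith [sq_nonneg p.1]
    have hB : |(2*π*s)⁻¹ * (Real.sign (Real.cos p.2) * Real.sign (Real.sin p.2))|
        ≤ (2*π*s)⁻¹ * 1 := by
      rw [abs_mul, abs_of_pos (by positivity : (0:ℝ) < (2*π*s)⁻¹)]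
      apply mul_le_mul_of_nonneg_left _ (by positivity)
      rw [abs_mul]
      exact mul_le_one₀ (aux_abs_sign_le _) (abs_nonneg _) (aux_abs_sign_le _)
    calc ‖G p‖ = |p.1 * Real.exp (-((1 - 2*ρ*Real.cos p.2*Real.sin p.2)/c) * p.1^2)|
          * |(2*π*s)⁻¹ * (Real.sign (Real.cos p.2) * Real.sign (Real.sin p.2))| := by
          rw [hG, Real.norm_eq_abs, abs_mul]
      _ ≤ (|p.1| * Real.exp (-((1-|ρ|)/c) * p.1^2)) * ((2*π*s)⁻¹ * 1) :=
          mul_le_mul hA hB (abs_nonneg _) (by positivity)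
      _ = (2*π*s)⁻¹ * (|p.1| * Real.exp (-((1-|ρ|)/c) * p.1^2)) * 1 := by ring
  -- Fubini
  have e2 : ∫ p in Ioi (0:ℝ) ×ˢ Ioo (-π) π, G p
      = ∫ θ in Ioo (-π) π, ∫ r in Ioi (0:ℝ), G (r, θ) := by
    rw [Measure.volume_eq_prod, ← Measure.prod_restrict]
    exact integral_prod_symm G hint
  rw [e2]
  -- inner integral
  have inner_eq : ∀ θ, (∫ r in Ioi (0:ℝ), G (r, θ))
      = (s/(2*π)) * (Real.sign (Real.cos θ) * Real.sign (Real.sin θ) *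
          (1 - 2*ρ*Real.cos θ*Real.sin θ)⁻¹) := by
    intro θ
    have hβ := aux_beta_pos hρ θ
    have hbq : 0 < (1 - 2*ρ*Real.cos θ*Real.sin θ)/c := div_pos hβ hc
    have : (∫ r in Ioi (0:ℝ), G (r, θ))
        = (∫ r in Ioi (0:ℝ), r * Real.exp (-((1 - 2*ρ*Real.cos θ*Real.sin θ)/c) * r^2))
          * ((2*π*s)⁻¹ * (Real.sign (Real.cos θ) * Real.sign (Real.sin θ))) := by
      rw [← MeasureTheory.integral_mul_const]
    rw [this, aux_gauss hbq]
    rw [eq_comm]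
    have hβ' : (1 - 2*ρ*Real.cos θ*Real.sin θ) ≠ 0 := hβ.ne'
    rw [hc_def, ← hs2]
    field_simp
  rw [setIntegral_congr_fun measurableSet_Ioo (fun θ _ => inner_eq θ),
    MeasureTheory.integral_const_mul, aux_A hρ]
  rw [← hs_def]
  field_simp
  ring
end

section
/- Let ρ ∈ (−1, 1) and let f : ℝ² → ℝ be the bivariate Gaussian density f(a, b) = (2π√(1 − ρ²))⁻¹ · exp(−(a² − 2ρab + b²)/(2(1 − ρ²))). Then the orthant probability satisfies ∫_{0}^{∞}∫_{0}^{∞} f(a, b) da db = 1/4 + arcsin(ρ)/(2π). -/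
open Real Set MeasureTheory intervalIntegral

lemma aux_int_r (k : ℝ) (hk : 0 < k) :
    ∫ r in Set.Ioi (0:ℝ), r * Real.exp (-k * r^2) = (2*k)⁻¹ := by
  have A : ∀ x : ℝ, HasDerivAt (fun x => -(2*k)⁻¹ * Real.exp (-k * x^2))
      (x * Real.exp (-k * x^2)) x := by
    intro x
    have h : HasDerivAt (fun x : ℝ => -(2*k)⁻¹ * Real.exp (-k * x^2)) _ x :=
      ((hasDerivAt_pow 2 x).const_mul (-k)).exp.const_mul (-(2*k)⁻¹)
    convert h using 1
    field_simp
    ring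
  have B : Filter.Tendsto (fun y : ℝ => -(2*k)⁻¹ * Real.exp (-k * y^2))
      Filter.atTop (nhds (-(2*k)⁻¹ * 0)) := by
    refine Filter.Tendsto.const_mul _ ?_
    simpa using (Filter.tendsto_pow_atTop two_ne_zero).const_mul_atTop hk
  have h := integral_Ioi_of_hasDerivAt_of_tendsto' (a := 0) (fun x _ => A x)
    (integrable_mul_exp_neg_mul_sq hk).integrableOn B
  rw [h]
  norm_num

lemma aux_arctan (ρ : ℝ) (h1 : -1 < ρ) (h2 : ρ < 1) :
    Real.arctan (Real.sqrt ((1+ρ)/(1-ρ))) = π/4 + Real.arcsin ρ / 2 := by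
  set φ := Real.arcsin ρ with hφ
  have hφ1 : -(π/2) < φ := Real.neg_pi_div_two_lt_arcsin.2 h1
  have hφ2 : φ < π/2 := Real.arcsin_lt_pi_div_two.2 h2
  set α := π/4 + φ/2 with hα
  have hα1 : 0 < α := by rw [hα]; linarith [Real.pi_pos]
  have hα2 : α < π/2 := by rw [hα]; linarith
  have hcosα : 0 < Real.cos α := Real.cos_pos_of_mem_Ioo ⟨by linarith, hα2⟩
  have hsinα : 0 < Real.sin α := Real.sin_pos_of_pos_of_lt_pi hα1 (hα2.trans (by linarith [Real.pi_pos]))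
  have hc2 : Real.cos (2*α) = -ρ := by
    rw [show 2*α = π/2 + φ by rw [hα]; ring, Real.cos_add]
    simp [hφ, Real.sin_arcsin h1.le h2.le]
  have hcos2 : Real.cos α ^ 2 = (1-ρ)/2 := by
    have := Real.cos_sq α
    rw [hc2] at this; linarith
  have hsin2 : Real.sin α ^ 2 = (1+ρ)/2 := by
    have := Real.sin_sq_add_cos_sq α
    rw [hcos2] at this; linarith
  have hT : Real.tan α ^ 2 = (1+ρ)/(1-ρ) := by
    rw [Real.tan_eq_sin_div_cos, div_pow, hsin2, hcos2]
    rw [div_div_div_cancel_right₀] <;> norm_num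
  have hk : Real.sqrt ((1+ρ)/(1-ρ)) = Real.tan α := by
    rw [← hT, Real.sqrt_sq (by rw [Real.tan_eq_sin_div_cos]; positivity)]
  rw [hk, Real.arctan_tan (by linarith) hα2]

lemma aux_hasDeriv (ρ : ℝ) (h1 : -1 < ρ) (h2 : ρ < 1) {θ : ℝ}
    (hθ1 : 0 ≤ θ) (hθ2 : θ ≤ π/2) :
    HasDerivAt (fun t => Real.arctan (Real.sqrt ((1+ρ)/(1-ρ)) * Real.tan (t - π/4)))
      (Real.sqrt (1-ρ^2) / (1 - 2*ρ*(Real.sin θ*Real.cos θ))) θ := by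
  have hπ := Real.pi_pos
  set k := Real.sqrt ((1+ρ)/(1-ρ)) with hk
  have hkpos : 0 < k := Real.sqrt_pos.mpr (div_pos (by linarith) (by linarith))
  have e2 : k^2 = (1+ρ)/(1-ρ) := Real.sq_sqrt (le_of_lt (div_pos (by linarith) (by linarith)))
  have hs : (0:ℝ) < 1 - ρ^2 := by nlinarith
  have hρne : (1:ℝ) - ρ ≠ 0 := by linarith
  have e1 : Real.sqrt (1-ρ^2) * k = 1+ρ := by
    rw [hk, ← Real.sqrt_mul hs.le,
      show (1-ρ^2)*((1+ρ)/(1-ρ)) = (1+ρ)^2 by field_simp; ring,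
      Real.sqrt_sq (by linarith)]
  have e3 : k^2*(1-ρ) = 1+ρ := by rw [e2]; field_simp
  have hsk : Real.sqrt (1-ρ^2) = k*(1-ρ) := by
    apply mul_left_cancel₀ hkpos.ne'
    linear_combination e1 - e3
  set ψ := θ - π/4 with hψ
  have hc : 0 < Real.cos ψ := by
    apply Real.cos_pos_of_mem_Ioo
    constructor <;> rw [hψ] <;> [linarith; linarith]
  have htan : HasDerivAt (fun t : ℝ => Real.tan (t - π/4)) (1 / Real.cos ψ ^ 2) θ := by
    have h := (Real.hasDerivAt_tan hc.ne').comp θ ((hasDerivAt_id θ).sub_const (π/4))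
    simpa [Function.comp_def] using h
  have hmul := htan.const_mul k
  have harc := (Real.hasDerivAt_arctan (k * Real.tan ψ)).comp θ hmul
  replace harc : HasDerivAt (fun t => Real.arctan (k * Real.tan (t - π/4))) _ θ := harc
  convert harc using 1
  rw [Real.tan_eq_sin_div_cos]
  set c := Real.cos ψ
  set sn := Real.sin ψ
  have hpyth : sn^2 + c^2 = 1 := Real.sin_sq_add_cos_sq ψ
  have hsc : Real.sin θ * Real.cos θ = (sn + c) * (c - sn) / 2 := by
    have hθψ : θ = ψ + π/4 := by rw [hψ]; ring
    rw [hθψ, Real.sin_add, Real.cos_add, Real.sin_pi_div_four, Real.cos_pi_div_four]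
    have h2 : Real.sqrt 2 ^ 2 = 2 := Real.sq_sqrt (by norm_num)
    nlinarith [h2]
  rw [hsc]
  have hD : 1 - 2*ρ*((sn + c) * (c - sn) / 2) = (1-ρ)*c^2 + (1+ρ)*sn^2 := by
    linear_combination -hpyth
  rw [hD]
  have hden1 : (0:ℝ) < (1-ρ)*c^2 + (1+ρ)*sn^2 := by
    nlinarith [mul_pos (show (0:ℝ)<1-ρ by linarith) (pow_pos hc 2), mul_nonneg (show (0:ℝ)≤1+ρ by linarith) (sq_nonneg sn)]
  have hRH : 1/(1+(k*(sn/c))^2)*(k*(1/c^2)) = k/(c^2+k^2*sn^2) := by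
    have hcne := hc.ne'
    field_simp
  have hden2 : (0:ℝ) < c^2 + k^2*sn^2 := by positivity
  rw [hRH, div_eq_div_iff hden1.ne' hden2.ne']
  linear_combination (c^2) * hsk + sn^2 * k * e1

lemma aux_qbound (ρ θ : ℝ) : 2*ρ*(Real.sin θ*Real.cos θ) ≤ |ρ| := by
  have h := Real.neg_one_le_sin (2*θ)
  have h' := Real.sin_le_one (2*θ)
  rw [Real.sin_two_mul] at h h'
  have ht : |2*Real.sin θ*Real.cos θ| ≤ 1 := abs_le.mpr ⟨h, h'⟩
  calc 2*ρ*(Real.sin θ*Real.cos θ) ≤ |2*ρ*(Real.sin θ*Real.cos θ)| := le_abs_self _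
    _ = |ρ| * |2*Real.sin θ*Real.cos θ| := by
        rw [show 2*ρ*(Real.sin θ*Real.cos θ) = ρ*(2*Real.sin θ*Real.cos θ) by ring, abs_mul]
    _ ≤ |ρ| * 1 := mul_le_mul_of_nonneg_left ht (abs_nonneg ρ)
    _ = |ρ| := mul_one _

lemma aux_qpos' (ρ : ℝ) (h1 : -1 < ρ) (h2 : ρ < 1) (θ : ℝ) :
    0 < 1 - 2*ρ*(Real.sin θ*Real.cos θ) := by
  have hρ : |ρ| < 1 := abs_lt.mpr ⟨h1, h2⟩
  linarith [aux_qbound ρ θ]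

lemma aux_qpos (ρ : ℝ) (h1 : -1 < ρ) (h2 : ρ < 1) (θ : ℝ) :
    0 < 1 - 2*ρ*(Real.sin θ*Real.cos θ) := by
  have h := Real.neg_one_le_sin (2*θ)
  have h' := Real.sin_le_one (2*θ)
  rw [Real.sin_two_mul] at h h'
  have ht : |2*Real.sin θ*Real.cos θ| ≤ 1 := abs_le.mpr ⟨h, h'⟩
  have hρ : |ρ| < 1 := abs_lt.mpr ⟨h1, h2⟩
  have hb : 2*ρ*(Real.sin θ*Real.cos θ) ≤ |ρ| := by
    calc 2*ρ*(Real.sin θ*Real.cos θ) ≤ |2*ρ*(Real.sin θ*Real.cos θ)| := le_abs_self _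
      _ = |ρ| * |2*Real.sin θ*Real.cos θ| := by
          rw [show 2*ρ*(Real.sin θ*Real.cos θ) = ρ*(2*Real.sin θ*Real.cos θ) by ring, abs_mul]
      _ ≤ |ρ| * 1 := mul_le_mul_of_nonneg_left ht (abs_nonneg ρ)
      _ = |ρ| := mul_one _
  linarith

lemma aux_theta (ρ : ℝ) (h1 : -1 < ρ) (h2 : ρ < 1) :
    ∫ θ in (0:ℝ)..(π/2), (1 - 2*ρ*(Real.sin θ*Real.cos θ))⁻¹ =
      (π/2 + Real.arcsin ρ)/Real.sqrt (1-ρ^2) := by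
  have hπ := Real.pi_pos
  have hs : (0:ℝ) < 1 - ρ^2 := by nlinarith
  have hss : 0 < Real.sqrt (1-ρ^2) := Real.sqrt_pos.mpr hs
  have hcont : Continuous fun θ : ℝ =>
      Real.sqrt (1-ρ^2) / (1 - 2*ρ*(Real.sin θ*Real.cos θ)) := by
    apply continuous_const.div (by continuity)
    exact fun θ => (aux_qpos' ρ h1 h2 θ).ne'
  have huIcc : uIcc (0:ℝ) (π/2) = Icc 0 (π/2) := uIcc_of_le (by linarith)
  have key : ∫ θ in (0:ℝ)..(π/2),
      Real.sqrt (1-ρ^2) / (1 - 2*ρ*(Real.sin θ*Real.cos θ)) =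
      π/2 + Real.arcsin ρ := by
    rw [intervalIntegral.integral_eq_sub_of_hasDerivAt
      (fun θ hθ => by
        rw [huIcc] at hθ
        exact aux_hasDeriv ρ h1 h2 hθ.1 hθ.2)
      (hcont.intervalIntegrable _ _)]
    rw [show π/2 - π/4 = π/4 by ring, show (0:ℝ) - π/4 = -(π/4) by ring,
      Real.tan_neg, Real.tan_pi_div_four, mul_neg, mul_one, Real.arctan_neg,
      aux_arctan ρ h1 h2]
    ring
  have expand : ∀ θ : ℝ, (1 - 2*ρ*(Real.sin θ*Real.cos θ))⁻¹ =
      (Real.sqrt (1-ρ^2))⁻¹ *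
        (Real.sqrt (1-ρ^2) / (1 - 2*ρ*(Real.sin θ*Real.cos θ))) := by
    intro θ
    field_simp
  simp_rw [expand]
  rw [intervalIntegral.integral_const_mul, key, div_eq_mul_inv]
  ring

set_option maxHeartbeats 1000000 in
/-- The orthant probability of the centered bivariate Gaussian with unit
variances and correlation `ρ` is `1/4 + arcsin(ρ)/(2π)`. -/
theorem stmt_10 (ρ : ℝ) (hρ : ρ ∈ Set.Ioo (-1 : ℝ) 1) (f : ℝ → ℝ → ℝ)
    (hf : ∀ a b, f a b = (2 * Real.pi * Real.sqrt (1 - ρ ^ 2))⁻¹ *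
      Real.exp (-(a ^ 2 - 2 * ρ * a * b + b ^ 2) / (2 * (1 - ρ ^ 2)))) :
    ∫ a in Set.Ioi (0 : ℝ), ∫ b in Set.Ioi (0 : ℝ), f a b =
      1 / 4 + Real.arcsin ρ / (2 * Real.pi) := by
  obtain ⟨h1, h2⟩ := hρ
  have hπ := Real.pi_pos
  have hs : (0:ℝ) < 1 - ρ^2 := by nlinarith
  have hss : 0 < Real.sqrt (1-ρ^2) := Real.sqrt_pos.mpr hs
  set s : ℝ := 1 - ρ^2 with hsdef
  set C : ℝ := (2 * Real.pi * Real.sqrt s)⁻¹ with hC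
  have hCpos : 0 < C := by positivity
  -- factorization of the density
  have hfactor : ∀ a b : ℝ, f a b =
      (C * Real.exp (-2⁻¹ * a^2)) * Real.exp (-(2*s)⁻¹ * (b-ρ*a)^2) := by
    intro a b
    rw [hf a b]
    conv_rhs => rw [mul_assoc, ← Real.exp_add]
    congr 2
    field_simp
    rw [hsdef]
    ring
  have hfc : Continuous fun p : ℝ×ℝ => f p.1 p.2 := by
    have : (fun p : ℝ×ℝ => f p.1 p.2) =
        fun p => (C * Real.exp (-2⁻¹ * p.1^2)) * Real.exp (-(2*s)⁻¹ * (p.2-ρ*p.1)^2) :=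
      funext fun p => hfactor p.1 p.2
    rw [this]
    continuity
  have hfpos : ∀ a b, 0 ≤ f a b := by
    intro a b
    rw [hfactor a b]
    positivity
  have h2s : (0:ℝ) < (2*s)⁻¹ := by positivity
  -- integrability on the plane
  have hint2 : Integrable (fun p : ℝ×ℝ => f p.1 p.2) := by
    rw [MeasureTheory.Measure.volume_eq_prod]
    refine (integrable_prod_iff ?_).mpr ⟨?_, ?_⟩
    · rw [← MeasureTheory.Measure.volume_eq_prod]; exact hfc.aestronglyMeasurable
    · refine ae_of_all _ fun a => ?_
      have : (fun b => f a b) =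
          fun b => (C * Real.exp (-2⁻¹ * a^2)) * Real.exp (-(2*s)⁻¹ * (b-ρ*a)^2) :=
        funext fun b => hfactor a b
      rw [this]
      exact ((integrable_exp_neg_mul_sq h2s).comp_sub_right (ρ*a)).const_mul _
    · have hval : ∀ a : ℝ, (∫ b, ‖f a b‖) =
          (C * Real.exp (-2⁻¹ * a^2)) * Real.sqrt (π/(2*s)⁻¹) := by
        intro a
        have h1' : ∀ b : ℝ, ‖f a b‖ = f a b := fun b => norm_of_nonneg (hfpos a b)
        simp_rw [h1', hfactor a]
        rw [MeasureTheory.integral_const_mul]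
        congr 1
        rw [integral_sub_right_eq_self (μ := volume)
          (fun b => Real.exp (-(2*s)⁻¹ * b^2)) (ρ*a), integral_gaussian]
      simp_rw [hval]
      exact ((integrable_exp_neg_mul_sq (by norm_num : (0:ℝ) < 2⁻¹)).const_mul _).mul_const _

  set Q : Set (ℝ×ℝ) := Ioi (0:ℝ) ×ˢ Ioi (0:ℝ) with hQ
  set Ff : ℝ×ℝ → ℝ := fun p => f p.1 p.2 with hFf
  set H : ℝ×ℝ → ℝ := fun p => p.1 * f (p.1 * Real.cos p.2) (p.1 * Real.sin p.2) with hH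
  set S' : Set (ℝ×ℝ) := Ioi (0:ℝ) ×ˢ Ioo (0:ℝ) (π/2) with hS'
  have hQmeas : MeasurableSet Q := measurableSet_Ioi.prod measurableSet_Ioi
  have hS'meas : MeasurableSet S' := measurableSet_Ioi.prod measurableSet_Ioo
  -- Step A
  have stepA : ∫ a in Ioi (0:ℝ), ∫ b in Ioi (0:ℝ), f a b = ∫ p : ℝ×ℝ, Q.indicator Ff p := by
    rw [MeasureTheory.integral_indicator hQmeas]
    have hint2' := hint2.integrableOn (s := Q)
    rw [Measure.volume_eq_prod] at hint2' ⊢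
    exact (setIntegral_prod Ff hint2').symm
  -- Step B + C
  have stepC : ∫ p : ℝ×ℝ, Q.indicator Ff p = ∫ p in S', H p := by
    rw [← integral_comp_polarCoord_symm (Q.indicator Ff)]
    rw [← MeasureTheory.integral_indicator polarCoord.open_target.measurableSet,
      ← MeasureTheory.integral_indicator hS'meas]
    congr 1
    funext p
    obtain ⟨r, θ⟩ := p
    by_cases hp : (r, θ) ∈ S'
    · obtain ⟨hr, hθ1, hθ2⟩ : 0 < r ∧ 0 < θ ∧ θ < π/2 := by
        simpa [hS'] using hp
      have ht : (r, θ) ∈ polarCoord.target := by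
        rw [polarCoord_target]
        exact ⟨hr, by constructor <;> linarith⟩
      rw [indicator_of_mem ht, indicator_of_mem hp, polarCoord_symm_apply]
      have hcos : 0 < Real.cos θ := Real.cos_pos_of_mem_Ioo ⟨by linarith, hθ2⟩
      have hsin : 0 < Real.sin θ := Real.sin_pos_of_pos_of_lt_pi hθ1 (by linarith)
      have hmem : ((r * Real.cos θ, r * Real.sin θ) : ℝ×ℝ) ∈ Q := by
        simp only [hQ, mem_prod, mem_Ioi]
        exact ⟨mul_pos hr hcos, mul_pos hr hsin⟩
      rw [indicator_of_mem hmem]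
      simp [hH, hFf, smul_eq_mul]
    · rw [indicator_of_notMem hp]
      by_cases ht : (r, θ) ∈ polarCoord.target
      · rw [indicator_of_mem ht]
        obtain ⟨hr, hθ1, hθ2⟩ : 0 < r ∧ -π < θ ∧ θ < π := by
          rw [polarCoord_target] at ht
          simpa using ht
        have hnot : polarCoord.symm (r, θ) ∉ Q := by
          rw [polarCoord_symm_apply]
          intro hmem
          obtain ⟨ha, hb⟩ : 0 < r * Real.cos θ ∧ 0 < r * Real.sin θ := by
            simpa [hQ] using hmem
          have hcos : 0 < Real.cos θ := by nlinarith
          have hsin : 0 < Real.sin θ := by nlinarith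
          have hθpos : 0 < θ := by
            by_contra hcon
            push_neg at hcon
            linarith [Real.sin_nonpos_of_nonpos_of_neg_pi_le hcon (by linarith)]
          have hθlt : θ < π/2 := by
            by_contra hcon
            push_neg at hcon
            linarith [Real.cos_nonpos_of_pi_div_two_le_of_le hcon (by linarith)]
          exact hp (by simp [hS', hr, hθpos, hθlt])
        rw [indicator_of_notMem hnot, smul_zero]
      · rw [indicator_of_notMem ht]
  -- quadratic form in polar coordinates
  have qform : ∀ r θ : ℝ, f (r*Real.cos θ) (r*Real.sin θ) =
      C * Real.exp (-((1-2*ρ*(Real.sin θ*Real.cos θ))/(2*s)) * r^2) := by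
    intro r θ
    rw [hf]
    congr 1
    have pyth := Real.sin_sq_add_cos_sq θ
    have key : (r*Real.cos θ)^2 - 2*ρ*(r*Real.cos θ)*(r*Real.sin θ) + (r*Real.sin θ)^2
        = (1-2*ρ*(Real.sin θ*Real.cos θ))*r^2 := by
      linear_combination (r^2) * pyth
    rw [key]
    ring
  -- continuity of H
  have hHc : Continuous H := by
    apply continuous_fst.mul
    exact hfc.comp ((continuous_fst.mul (Real.continuous_cos.comp continuous_snd)).prodMk
      (continuous_fst.mul (Real.continuous_sin.comp continuous_snd)))
  -- integrability on the swapped product set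
  have hρabs : |ρ| < 1 := abs_lt.mpr ⟨h1, h2⟩
  have hk₀ : (0:ℝ) < (1-|ρ|) * (2*s)⁻¹ := by
    apply mul_pos (by linarith)
    positivity
  have hHint : IntegrableOn (fun z : ℝ×ℝ => H (z.2, z.1))
      (Ioo (0:ℝ) (π/2) ×ˢ Ioi (0:ℝ)) := by
    refine Integrable.mono'
      (g := fun z : ℝ×ℝ => C * (z.2 * Real.exp (-((1-|ρ|)*(2*s)⁻¹) * z.2^2))) ?_ ?_ ?_
    · have hfin : (volume (Ioo (0:ℝ) (π/2))) < ⊤ := by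
        rw [Real.volume_Ioo]; exact ENNReal.ofReal_lt_top
      have hc1 : Integrable (fun _ : ℝ => (1:ℝ)) (volume.restrict (Ioo (0:ℝ) (π/2))) :=
        integrableOn_const hfin.ne
      have hc2 : Integrable (fun r : ℝ => C * (r * Real.exp (-((1-|ρ|)*(2*s)⁻¹) * r^2)))
          (volume.restrict (Ioi (0:ℝ))) :=
        (((integrable_mul_exp_neg_mul_sq hk₀).const_mul C).integrableOn)
      have hkey := hc1.mul_prod hc2
      rw [Measure.prod_restrict] at hkey
      simp only [one_mul] at hkey
      show Integrable _ ((volume : Measure (ℝ×ℝ)).restrict _)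
      rw [Measure.volume_eq_prod]
      exact hkey
    · exact ((hHc.comp (continuous_snd.prodMk continuous_fst)).aestronglyMeasurable).restrict
    · refine (ae_restrict_iff' (measurableSet_Ioo.prod measurableSet_Ioi)).mpr
        (ae_of_all _ ?_)
      rintro ⟨θ, r⟩ hz
      obtain ⟨hθ, hr⟩ : (θ ∈ Ioo (0:ℝ) (π/2)) ∧ r ∈ Ioi (0:ℝ) := by simpa using hz
      have hrpos : (0:ℝ) < r := hr
      show ‖H (r, θ)‖ ≤ C * (r * Real.exp (-((1-|ρ|)*(2*s)⁻¹) * r^2))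
      have hHval : H (r, θ) =
          C * (r * Real.exp (-((1-2*ρ*(Real.sin θ*Real.cos θ))/(2*s)) * r^2)) := by
        simp only [hH]
        rw [qform]
        ring
      rw [hHval, norm_of_nonneg (by positivity)]
      have hmono : -((1-2*ρ*(Real.sin θ*Real.cos θ))/(2*s)) * r^2
          ≤ -((1-|ρ|)*(2*s)⁻¹) * r^2 := by
        have hq : (1-|ρ|) ≤ 1-2*ρ*(Real.sin θ*Real.cos θ) := by linarith [aux_qbound ρ θ]
        have hle : (1-|ρ|)*(2*s)⁻¹ ≤ (1-2*ρ*(Real.sin θ*Real.cos θ))/(2*s) := by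
          rw [div_eq_mul_inv]
          exact mul_le_mul_of_nonneg_right hq (by positivity)
        nlinarith [sq_nonneg r]
      gcongr

  -- Step D : swap coordinates and iterate
  have hswapset : MeasurableSet (Ioo (0:ℝ) (π/2) ×ˢ Ioi (0:ℝ)) :=
    measurableSet_Ioo.prod measurableSet_Ioi
  have hfun2 : (fun z : ℝ×ℝ => S'.indicator H z.swap) =
      (Ioo (0:ℝ) (π/2) ×ˢ Ioi (0:ℝ)).indicator (fun z => H (z.2, z.1)) := by
    funext z
    obtain ⟨θ, r⟩ := z
    by_cases h : (θ, r) ∈ Ioo (0:ℝ) (π/2) ×ˢ Ioi (0:ℝ)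
    · have h' : ((r, θ) : ℝ×ℝ) ∈ S' := by
        have := h
        simp only [mem_prod, mem_Ioo, mem_Ioi] at this
        simp [hS', this.1.1, this.1.2, this.2]
      rw [indicator_of_mem h]
      exact (indicator_of_mem h' H)
    · have h' : ((r, θ) : ℝ×ℝ) ∉ S' := by
        intro hc
        apply h
        simp only [hS', mem_prod, mem_Ioo, mem_Ioi] at hc
        simp [hc.1, hc.2.1, hc.2.2]
      rw [indicator_of_notMem h]
      exact (indicator_of_notMem h' H)
  have stepD : ∫ p in S', H p =
      ∫ θ in Ioo (0:ℝ) (π/2), ∫ r in Ioi (0:ℝ), H (r, θ) := by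
    rw [← MeasureTheory.integral_indicator hS'meas]
    have hswap : ∫ z : ℝ×ℝ, S'.indicator H z = ∫ z : ℝ×ℝ, S'.indicator H z.swap := by
      rw [Measure.volume_eq_prod]
      exact (integral_prod_swap (S'.indicator H)).symm
    rw [hswap, hfun2, MeasureTheory.integral_indicator hswapset]
    rw [Measure.volume_eq_prod]
    exact setIntegral_prod _ hHint
  -- inner integral
  have inner : ∀ θ : ℝ, (∫ r in Ioi (0:ℝ), H (r, θ)) =
      (C*s) * (1 - 2*ρ*(Real.sin θ*Real.cos θ))⁻¹ := by
    intro θ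
    have hq := aux_qpos' ρ h1 h2 θ
    have hkpos : 0 < (1 - 2*ρ*(Real.sin θ*Real.cos θ))/(2*s) := by positivity
    have hint : ∫ r in Ioi (0:ℝ), H (r, θ) =
        C * ∫ r in Ioi (0:ℝ), r * Real.exp (-((1-2*ρ*(Real.sin θ*Real.cos θ))/(2*s)) * r^2) := by
      rw [← MeasureTheory.integral_const_mul]
      apply setIntegral_congr_fun measurableSet_Ioi
      intro r _
      simp only [hH]
      rw [qform]
      ring
    rw [hint, aux_int_r _ hkpos]
    rw [show (2*((1 - 2*ρ*(Real.sin θ*Real.cos θ))/(2*s)))⁻¹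
        = s * (1 - 2*ρ*(Real.sin θ*Real.cos θ))⁻¹ by
      rw [show 2*((1 - 2*ρ*(Real.sin θ*Real.cos θ))/(2*s))
          = (1 - 2*ρ*(Real.sin θ*Real.cos θ))/s by field_simp]
      rw [div_eq_mul_inv, mul_inv, inv_inv]
      ring]
    ring
  -- outer integral
  have stepE : ∫ θ in Ioo (0:ℝ) (π/2), ∫ r in Ioi (0:ℝ), H (r, θ)
      = (C*s) * ((π/2 + Real.arcsin ρ)/Real.sqrt s) := by
    calc ∫ θ in Ioo (0:ℝ) (π/2), ∫ r in Ioi (0:ℝ), H (r, θ)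
        = ∫ θ in Ioo (0:ℝ) (π/2), (C*s) * (1 - 2*ρ*(Real.sin θ*Real.cos θ))⁻¹ := by
          apply setIntegral_congr_fun measurableSet_Ioo
          intro θ _
          exact inner θ
      _ = (C*s) * ∫ θ in Ioo (0:ℝ) (π/2), (1 - 2*ρ*(Real.sin θ*Real.cos θ))⁻¹ :=
          MeasureTheory.integral_const_mul _ _
      _ = (C*s) * ((π/2 + Real.arcsin ρ)/Real.sqrt s) := by
          rw [← MeasureTheory.integral_Ioc_eq_integral_Ioo,
            ← intervalIntegral.integral_of_le (by linarith : (0:ℝ) ≤ π/2),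
            aux_theta ρ h1 h2]
  rw [stepA, stepC, stepD, stepE]
  have hsq : Real.sqrt s * Real.sqrt s = s := Real.mul_self_sqrt hs.le
  have hcalc : C * s * ((π/2 + Real.arcsin ρ)/Real.sqrt s) = (π/2 + Real.arcsin ρ)/(2*π) := by
    rw [hC, show (2*π*Real.sqrt s)⁻¹ * s * ((π/2 + Real.arcsin ρ)/Real.sqrt s)
        = (π/2 + Real.arcsin ρ) * (s / (Real.sqrt s * Real.sqrt s)) / (2*π) by ring]
    rw [hsq, div_self hs.ne', mul_one]
  rw [hcalc]
  field_simp
  ring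
end

section
/- Let n ≥ 2, let c₁, c₂ ∈ (−1, 1), d₁, …, dₙ ∈ (−1, 1), and let e_{xy} ∈ ℝ for x ∈ {1, 2}, y ∈ {1, …, n}. Define D_{xy} = (e_{xy} − c_x·d_y)/√((1 − c_x²)(1 − d_y²)), and assume |D_{xy}| ≤ 1 for all x, y. Then there exist a real number t and a real symmetric n×n matrix Y with Y_{jj} = 1 such that the (n+3)×(n+3) real symmetric matrix Γ¹ = [[1, cᵀ, dᵀ],[c, X, E],[d, Eᵀ, Y]], where c = (c₁, c₂)ᵀ, d = (d₁, …, dₙ)ᵀ, X = [[1, t],[t, 1]], and E is the 2×n matrix with entries E_{xy} = e_{xy}, is positive semidefinite, if and only if for all i, j ∈ {1, …, n}, each of the four inequalities obtained by placing a single minus sign on one of the four terms holds: |arcsin(D_{1i}) + arcsin(D_{2i}) + arcsin(D_{1j}) − arcsin(D_{2j})| ≤ π and the three other placements of the minus sign. -/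
open Matrix Real
variable {ι : Type*} [Fintype ι]

variable {ι : Type*} [Fintype ι]

private lemma dot_sq_le (x y : ι → ℝ) :
    (x ⬝ᵥ y) ^ 2 ≤ (x ⬝ᵥ x) * (y ⬝ᵥ y) := by
  simpa [dotProduct, ← pow_two] using
    Finset.sum_mul_sq_le_sq_mul_sq Finset.univ x y

private lemma inner_bounds {a b m : ι → ℝ}
    (ha : a ⬝ᵥ a = 1) (hb : b ⬝ᵥ b = 1) (hm : m ⬝ᵥ m = 1) :
    Real.cos (Real.arccos (a ⬝ᵥ m) + Real.arccos (b ⬝ᵥ m)) ≤ a ⬝ᵥ b ∧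
      a ⬝ᵥ b ≤ Real.cos (Real.arccos (a ⬝ᵥ m) - Real.arccos (b ⬝ᵥ m)) := by
  set p := a ⬝ᵥ m with hp
  set q := b ⬝ᵥ m with hq
  set g := a ⬝ᵥ b with hg
  have hp2 : p ^ 2 ≤ 1 := by simpa [ha, hm] using dot_sq_le a m
  have hq2 : q ^ 2 ≤ 1 := by simpa [hb, hm] using dot_sq_le b m
  have h1 : (a - p • m) ⬝ᵥ (b - q • m) = g - p * q := by
    simp [sub_dotProduct, dotProduct_sub, smul_dotProduct,
      dotProduct_smul, smul_eq_mul, ha, hb, hm, ← hp, ← hq,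
      dotProduct_comm m a, dotProduct_comm m b]
    try ring
  have h2 : (a - p • m) ⬝ᵥ (a - p • m) = 1 - p ^ 2 := by
    simp [sub_dotProduct, dotProduct_sub, smul_dotProduct,
      dotProduct_smul, smul_eq_mul, ha, hm, ← hp, dotProduct_comm m a]
    ring
  have h3 : (b - q • m) ⬝ᵥ (b - q • m) = 1 - q ^ 2 := by
    simp [sub_dotProduct, dotProduct_sub, smul_dotProduct,
      dotProduct_smul, smul_eq_mul, hb, hm, ← hq, dotProduct_comm m b]
    ring
  have key : (g - p * q) ^ 2 ≤ (1 - p ^ 2) * (1 - q ^ 2) := by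
    have := dot_sq_le (a - p • m) (b - q • m)
    rwa [h1, h2, h3] at this
  have hp1 : -1 ≤ p ∧ p ≤ 1 := abs_le.mp (abs_le_one_iff_mul_self_le_one.mpr (by nlinarith))
  have hq1 : -1 ≤ q ∧ q ≤ 1 := abs_le.mp (abs_le_one_iff_mul_self_le_one.mpr (by nlinarith))
  have sp : Real.sin (Real.arccos p) = Real.sqrt (1 - p ^ 2) := Real.sin_arccos p
  have sq' : Real.sin (Real.arccos q) = Real.sqrt (1 - q ^ 2) := Real.sin_arccos q
  have cp : Real.cos (Real.arccos p) = p := Real.cos_arccos hp1.1 hp1.2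
  have cq : Real.cos (Real.arccos q) = q := Real.cos_arccos hq1.1 hq1.2
  have hsp : Real.sqrt (1 - p ^ 2) ^ 2 = 1 - p ^ 2 := Real.sq_sqrt (by linarith)
  have hsq : Real.sqrt (1 - q ^ 2) ^ 2 = 1 - q ^ 2 := Real.sq_sqrt (by linarith)
  have hspn : (0:ℝ) ≤ Real.sqrt (1 - p ^ 2) := Real.sqrt_nonneg _
  have hsqn : (0:ℝ) ≤ Real.sqrt (1 - q ^ 2) := Real.sqrt_nonneg _
  have key2 : (g - p * q) ^ 2 ≤ (Real.sqrt (1 - p ^ 2) * Real.sqrt (1 - q ^ 2)) ^ 2 := by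
    rw [mul_pow, hsp, hsq]; exact key
  have habs : |g - p * q| ≤ Real.sqrt (1 - p ^ 2) * Real.sqrt (1 - q ^ 2) := by
    rw [← Real.sqrt_sq_eq_abs]
    calc Real.sqrt ((g - p * q) ^ 2) ≤ Real.sqrt ((Real.sqrt (1 - p ^ 2) * Real.sqrt (1 - q ^ 2)) ^ 2) :=
          Real.sqrt_le_sqrt key2
      _ = Real.sqrt (1 - p ^ 2) * Real.sqrt (1 - q ^ 2) := Real.sqrt_sq (mul_nonneg hspn hsqn)
  obtain ⟨hl, hr⟩ := abs_le.mp habs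
  rw [Real.cos_add, Real.cos_sub, cp, cq, sp, sq']
  constructor <;> linarith

private lemma arccos_antitone {x y : ℝ} (h : x ≤ y) : Real.arccos y ≤ Real.arccos x := by
  simp only [Real.arccos_eq_pi_div_two_sub_arcsin]
  linarith [Real.monotone_arcsin h]

private lemma arccos_le_add {A B g : ℝ} (hA : 0 ≤ A) (hB : 0 ≤ B)
    (h : Real.cos (A + B) ≤ g) : Real.arccos g ≤ A + B := by
  by_cases hle : A + B ≤ Real.pi
  · calc Real.arccos g ≤ Real.arccos (Real.cos (A + B)) := arccos_antitone h
      _ = A + B := Real.arccos_cos (by linarith) hle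
  · linarith [Real.arccos_le_pi g]

private lemma abs_sub_le_arccos {A B g : ℝ} (hA : A ≤ Real.pi) (hB : B ≤ Real.pi)
    (hA0 : 0 ≤ A) (hB0 : 0 ≤ B) (h : g ≤ Real.cos (A - B)) : |A - B| ≤ Real.arccos g := by
  have h1 : Real.cos (A - B) = Real.cos |A - B| := (Real.cos_abs _).symm
  calc |A - B| = Real.arccos (Real.cos |A - B|) :=
        (Real.arccos_cos (abs_nonneg _) (by rw [abs_le]; constructor <;> linarith)).symm
    _ ≤ Real.arccos g := arccos_antitone (h1 ▸ h)


private lemma dot_residual {v0 z z' : ι → ℝ} {γ γ' : ℝ} (g1 : v0 ⬝ᵥ v0 = 1)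
    (hz : z ⬝ᵥ v0 = γ) (hz' : z' ⬝ᵥ v0 = γ') :
    ((Real.sqrt (1 - γ ^ 2))⁻¹ • (z - γ • v0)) ⬝ᵥ ((Real.sqrt (1 - γ' ^ 2))⁻¹ • (z' - γ' • v0))
      = (Real.sqrt (1 - γ ^ 2))⁻¹ * (Real.sqrt (1 - γ' ^ 2))⁻¹ * (z ⬝ᵥ z' - γ * γ') := by
  have c1 : v0 ⬝ᵥ z' = γ' := by rw [dotProduct_comm]; exact hz'
  simp only [smul_dotProduct, dotProduct_smul, sub_dotProduct,
    dotProduct_sub, smul_eq_mul, g1, hz, hz', c1]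
  ring

private lemma fwd (n : ℕ) (hn : 2 ≤ n) (c : Fin 2 → ℝ) (d : Fin n → ℝ)
    (hc : ∀ x, c x ∈ Set.Ioo (-1 : ℝ) 1) (hd : ∀ y, d y ∈ Set.Ioo (-1 : ℝ) 1)
    (e : Matrix (Fin 2) (Fin n) ℝ) (D : Fin 2 → Fin n → ℝ)
    (hD : ∀ x y, D x y = (e x y - c x * d y) /
      Real.sqrt ((1 - c x ^ 2) * (1 - d y ^ 2)))
    (H : ∃ (t : ℝ) (Y : Matrix (Fin n) (Fin n) ℝ), Y.IsSymm ∧ (∀ j, Y j j = 1) ∧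
      (Matrix.fromBlocks (1 : Matrix (Fin 1) (Fin 1) ℝ)
        (Matrix.of fun (_ : Fin 1) (j : Fin 2 ⊕ Fin n) => Sum.elim c d j)
        (Matrix.of fun (i : Fin 2 ⊕ Fin n) (_ : Fin 1) => Sum.elim c d i)
        (Matrix.fromBlocks !![(1 : ℝ), t; t, 1] e eᵀ Y)).PosSemidef) :
    ∀ i j : Fin n,
      |Real.arccos (D 0 i) - Real.arccos (D 1 i)| ≤ Real.arccos (D 0 j) + Real.arccos (D 1 j) ∧
      Real.arccos (D 0 j) + Real.arccos (D 1 j)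
        ≤ 2 * Real.pi - |Real.arccos (D 0 i) - Real.arccos (D 1 i)| := by
  obtain ⟨t, Y, hYs, hYd, hPSD⟩ := H
  obtain ⟨B, hB⟩ : ∃ B : Matrix (Fin 1 ⊕ (Fin 2 ⊕ Fin n)) (Fin 1 ⊕ (Fin 2 ⊕ Fin n)) ℝ,
      _ = Bᴴ * B := by
    open scoped MatrixOrder in
    exact CStarAlgebra.nonneg_iff_eq_star_mul_self.mp hPSD.nonneg
  set Γ := (Matrix.fromBlocks (1 : Matrix (Fin 1) (Fin 1) ℝ)
        (Matrix.of fun (_ : Fin 1) (j : Fin 2 ⊕ Fin n) => Sum.elim c d j)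
        (Matrix.of fun (i : Fin 2 ⊕ Fin n) (_ : Fin 1) => Sum.elim c d i)
        (Matrix.fromBlocks !![(1 : ℝ), t; t, 1] e eᵀ Y)) with hΓ
  set W : (Fin 1 ⊕ (Fin 2 ⊕ Fin n)) → (Fin 1 ⊕ (Fin 2 ⊕ Fin n)) → ℝ :=
    fun i => fun k => B k i with hW
  have hGram : ∀ i j, W i ⬝ᵥ W j = Γ i j := by
    intro i j
    rw [hB]
    simp [Matrix.mul_apply, Matrix.conjTranspose_apply, dotProduct, hW]
  have hc2 : ∀ x, (0:ℝ) < 1 - c x ^ 2 := by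
    intro x; obtain ⟨h1, h2⟩ := hc x; nlinarith
  have hd2 : ∀ y, (0:ℝ) < 1 - d y ^ 2 := by
    intro y; obtain ⟨h1, h2⟩ := hd y; nlinarith
  set v0 := W (Sum.inl 0) with hv0
  have g1 : v0 ⬝ᵥ v0 = 1 := by
    rw [hv0, hGram, hΓ]; simp [Matrix.fromBlocks, Matrix.one_apply]
  have gA : ∀ x, W (Sum.inr (Sum.inl x)) ⬝ᵥ v0 = c x := by
    intro x; rw [hv0, hGram, hΓ]; simp [Matrix.fromBlocks]
  have gB : ∀ y, W (Sum.inr (Sum.inr y)) ⬝ᵥ v0 = d y := by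
    intro y; rw [hv0, hGram, hΓ]; simp [Matrix.fromBlocks]
  have gAA : ∀ x, W (Sum.inr (Sum.inl x)) ⬝ᵥ W (Sum.inr (Sum.inl x)) = 1 := by
    intro x; rw [hGram, hΓ]; fin_cases x <;> simp [Matrix.fromBlocks]
  have gBB : ∀ y, W (Sum.inr (Sum.inr y)) ⬝ᵥ W (Sum.inr (Sum.inr y)) = 1 := by
    intro y; rw [hGram, hΓ]; simp [Matrix.fromBlocks, hYd]
  have gAB : ∀ x y, W (Sum.inr (Sum.inl x)) ⬝ᵥ W (Sum.inr (Sum.inr y)) = e x y := by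
    intro x y; rw [hGram, hΓ]; simp [Matrix.fromBlocks]
  set u : Fin 2 → (Fin 1 ⊕ (Fin 2 ⊕ Fin n)) → ℝ :=
    fun x => (Real.sqrt (1 - c x ^ 2))⁻¹ • (W (Sum.inr (Sum.inl x)) - c x • v0) with hu_def
  set w : Fin n → (Fin 1 ⊕ (Fin 2 ⊕ Fin n)) → ℝ :=
    fun y => (Real.sqrt (1 - d y ^ 2))⁻¹ • (W (Sum.inr (Sum.inr y)) - d y • v0) with hw_def
  have hrc : ∀ x, (0:ℝ) < Real.sqrt (1 - c x ^ 2) := fun x => Real.sqrt_pos.mpr (hc2 x)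
  have hrd : ∀ y, (0:ℝ) < Real.sqrt (1 - d y ^ 2) := fun y => Real.sqrt_pos.mpr (hd2 y)
  have hu : ∀ x, u x ⬝ᵥ u x = 1 := by
    intro x
    rw [hu_def]
    rw [dot_residual g1 (gA x) (gA x), gAA]
    have h2 := Real.sq_sqrt (hc2 x).le
    have := hrc x
    field_simp
    nlinarith [h2]
  have hw : ∀ y, w y ⬝ᵥ w y = 1 := by
    intro y
    rw [hw_def]
    rw [dot_residual g1 (gB y) (gB y), gBB]
    have h2 := Real.sq_sqrt (hd2 y).le
    have := hrd y
    field_simp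
    nlinarith [h2]
  have huw : ∀ x y, u x ⬝ᵥ w y = D x y := by
    intro x y
    rw [hu_def, hw_def]
    rw [dot_residual g1 (gA x) (gB y), gAB, hD x y,
      Real.sqrt_mul (hc2 x).le]
    have h1 := (hrc x).ne'
    have h2 := (hrd y).ne'
    field_simp
    try ring
  intro i j
  have Hi := inner_bounds (hu 0) (hu 1) (hw i)
  rw [huw 0 i, huw 1 i] at Hi
  have Hj := inner_bounds (hu 0) (hu 1) (hw j)
  rw [huw 0 j, huw 1 j] at Hj
  have hwn : (-(w j)) ⬝ᵥ (-(w j)) = 1 := by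
    simp [neg_dotProduct, dotProduct_neg, hw j]
  have Hjn := inner_bounds (hu 0) (hu 1) hwn
  have e0 : u 0 ⬝ᵥ (-(w j)) = -(D 0 j) := by simp [dotProduct_neg, huw 0 j]
  have e1 : u 1 ⬝ᵥ (-(w j)) = -(D 1 j) := by simp [dotProduct_neg, huw 1 j]
  rw [e0, e1, Real.arccos_neg, Real.arccos_neg] at Hjn
  have h1 : |Real.arccos (D 0 i) - Real.arccos (D 1 i)| ≤ Real.arccos (u 0 ⬝ᵥ u 1) :=
    abs_sub_le_arccos (Real.arccos_le_pi _) (Real.arccos_le_pi _)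
      (Real.arccos_nonneg _) (Real.arccos_nonneg _) Hi.2
  have h2 : Real.arccos (u 0 ⬝ᵥ u 1) ≤ Real.arccos (D 0 j) + Real.arccos (D 1 j) :=
    arccos_le_add (Real.arccos_nonneg _) (Real.arccos_nonneg _) Hj.1
  have h3 : Real.arccos (u 0 ⬝ᵥ u 1)
      ≤ (Real.pi - Real.arccos (D 0 j)) + (Real.pi - Real.arccos (D 1 j)) :=
    arccos_le_add (by linarith [Real.arccos_le_pi (D 0 j)])
      (by linarith [Real.arccos_le_pi (D 1 j)]) Hjn.1
  exact ⟨le_trans h1 h2, by linarith⟩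

private lemma sds {κ : Type*} [Fintype κ] [DecidableEq κ] (i i' : κ) (x y : ℝ) :
    Pi.single i x ⬝ᵥ Pi.single i' y = if i = i' then x * y else 0 := by
  rw [single_dotProduct, Pi.single_apply]
  by_cases h : i = i' <;> simp [h]

set_option maxHeartbeats 1000000 in
private lemma bwd (n : ℕ) (hn : 2 ≤ n) (c : Fin 2 → ℝ) (d : Fin n → ℝ)
    (hc : ∀ x, c x ∈ Set.Ioo (-1 : ℝ) 1) (hd : ∀ y, d y ∈ Set.Ioo (-1 : ℝ) 1)
    (e : Matrix (Fin 2) (Fin n) ℝ) (D : Fin 2 → Fin n → ℝ)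
    (hD : ∀ x y, D x y = (e x y - c x * d y) /
      Real.sqrt ((1 - c x ^ 2) * (1 - d y ^ 2)))
    (hDle : ∀ x y, |D x y| ≤ 1)
    (R : ∀ i j : Fin n,
      |Real.arccos (D 0 i) - Real.arccos (D 1 i)| ≤ Real.arccos (D 0 j) + Real.arccos (D 1 j) ∧
      Real.arccos (D 0 j) + Real.arccos (D 1 j)
        ≤ 2 * Real.pi - |Real.arccos (D 0 i) - Real.arccos (D 1 i)|) :
    ∃ (t : ℝ) (Y : Matrix (Fin n) (Fin n) ℝ), Y.IsSymm ∧ (∀ j, Y j j = 1) ∧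
      (Matrix.fromBlocks (1 : Matrix (Fin 1) (Fin 1) ℝ)
        (Matrix.of fun (_ : Fin 1) (j : Fin 2 ⊕ Fin n) => Sum.elim c d j)
        (Matrix.of fun (i : Fin 2 ⊕ Fin n) (_ : Fin 1) => Sum.elim c d i)
        (Matrix.fromBlocks !![(1 : ℝ), t; t, 1] e eᵀ Y)).PosSemidef := by
  have hc2 : ∀ x, (0:ℝ) < 1 - c x ^ 2 := by
    intro x; obtain ⟨h1, h2⟩ := hc x; nlinarith
  have hd2 : ∀ y, (0:ℝ) < 1 - d y ^ 2 := by
    intro y; obtain ⟨h1, h2⟩ := hd y; nlinarith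
  have hD2 : ∀ x y, (D x y) ^ 2 ≤ 1 := by
    intro x y
    have := hDle x y
    nlinarith [abs_nonneg (D x y), sq_abs (D x y)]
  haveI : NeZero n := ⟨by omega⟩
  set α : Fin n → ℝ := fun y => Real.arccos (D 0 y) with hα
  set β : Fin n → ℝ := fun y => Real.arccos (D 1 y) with hβ
  have hne : (Finset.univ : Finset (Fin n)).Nonempty := ⟨⟨0, by omega⟩, Finset.mem_univ _⟩
  set ψ := Finset.univ.sup' hne (fun i => |α i - β i|) with hψ
  have hψ1 : ∀ i, |α i - β i| ≤ ψ := by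
    intro i
    rw [hψ]
    exact Finset.le_sup' (fun i => |α i - β i|) (Finset.mem_univ i)
  have hψ2 : ∀ j, ψ ≤ α j + β j := fun j => Finset.sup'_le _ _ (fun i _ => (R i j).1)
  have hψ3 : ∀ j, ψ ≤ 2 * Real.pi - (α j + β j) := by
    intro j
    refine Finset.sup'_le _ _ (fun i _ => ?_)
    have := (R i j).2; linarith
  have hψ0 : 0 ≤ ψ := le_trans (abs_nonneg _) (hψ1 ⟨0, by omega⟩)
  have hψπ : ψ ≤ Real.pi := by
    have h2 := hψ2 ⟨0, by omega⟩; have h3 := hψ3 ⟨0, by omega⟩; linarith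
  have hcα : ∀ y, Real.cos (α y) = D 0 y := by
    intro y; exact Real.cos_arccos (abs_le.mp (hDle 0 y)).1 (abs_le.mp (hDle 0 y)).2
  have hcβ : ∀ y, Real.cos (β y) = D 1 y := by
    intro y; exact Real.cos_arccos (abs_le.mp (hDle 1 y)).1 (abs_le.mp (hDle 1 y)).2
  have hcosT : ∀ y, Real.cos ψ ≤ Real.cos (α y - β y) := by
    intro y
    rw [← Real.cos_abs (α y - β y)]
    exact Real.cos_le_cos_of_nonneg_of_le_pi (abs_nonneg _) hψπ (hψ1 y)
  have hcosS : ∀ y, Real.cos (α y + β y) ≤ Real.cos ψ := by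
    intro y
    by_cases hS : α y + β y ≤ Real.pi
    · exact Real.cos_le_cos_of_nonneg_of_le_pi hψ0 hS (hψ2 y)
    · have h1 : Real.cos (α y + β y) = Real.cos (2 * Real.pi - (α y + β y)) := by
        rw [Real.cos_two_pi_sub]
      rw [h1]
      exact Real.cos_le_cos_of_nonneg_of_le_pi hψ0 (by linarith) (hψ3 y)
  have key : ∀ y, (D 1 y - Real.cos ψ * D 0 y) ^ 2
      ≤ (1 - (D 0 y) ^ 2) * (1 - Real.cos ψ ^ 2) := by
    intro y
    have h := mul_nonneg (sub_nonneg.mpr (hcosT y)) (sub_nonneg.mpr (hcosS y))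
    have e1 : Real.cos (α y - β y) = D 0 y * D 1 y + Real.sin (α y) * Real.sin (β y) := by
      rw [Real.cos_sub, hcα, hcβ]
    have e2 : Real.cos (α y + β y) = D 0 y * D 1 y - Real.sin (α y) * Real.sin (β y) := by
      rw [Real.cos_add, hcα, hcβ]
    have s1 : Real.sin (α y) ^ 2 = 1 - (D 0 y) ^ 2 := by rw [Real.sin_sq, hcα]
    have s2 : Real.sin (β y) ^ 2 = 1 - (D 1 y) ^ 2 := by rw [Real.sin_sq, hcβ]
    rw [e1, e2] at h
    have key0 : (Real.cos ψ - D 0 y * D 1 y) ^ 2 ≤ (1 - (D 0 y) ^ 2) * (1 - (D 1 y) ^ 2) := by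
      nlinarith [h, s1, s2]
    nlinarith [key0]
  have hs : ∀ y, ∃ sy : ℝ, Real.sin ψ * sy = D 1 y - Real.cos ψ * D 0 y ∧
      sy ^ 2 ≤ 1 - (D 0 y) ^ 2 := by
    intro y
    by_cases hsψ : Real.sin ψ = 0
    · have hc1 : Real.cos ψ ^ 2 = 1 := by
        have := Real.sin_sq_add_cos_sq ψ; nlinarith [hsψ]
      have h0 : (D 1 y - Real.cos ψ * D 0 y) ^ 2 ≤ 0 := by nlinarith [key y, hD2 0 y]
      have h0' : D 1 y - Real.cos ψ * D 0 y = 0 := by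
        nlinarith [sq_nonneg (D 1 y - Real.cos ψ * D 0 y)]
      exact ⟨0, by rw [h0']; ring, by nlinarith [hD2 0 y]⟩
    · have hsψ2 : 0 < Real.sin ψ ^ 2 := by positivity
      refine ⟨(D 1 y - Real.cos ψ * D 0 y) / Real.sin ψ, by field_simp, ?_⟩
      rw [div_pow, div_le_iff₀ hsψ2]
      have hpy : Real.sin ψ ^ 2 = 1 - Real.cos ψ ^ 2 := Real.sin_sq ψ
      nlinarith [key y]
  choose s hs1 hs2 using hs
  obtain ⟨ν, hνdef⟩ : ∃ ν : Fin n → ℝ, ν = fun y => Real.sqrt (1 - (D 0 y) ^ 2 - s y ^ 2) :=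
    ⟨_, rfl⟩
  have hν : ∀ y, ν y ^ 2 = 1 - (D 0 y) ^ 2 - s y ^ 2 := by
    intro y; rw [hνdef]; exact Real.sq_sqrt (by nlinarith [hs2 y])
  -- the vectors
  obtain ⟨u, hu_def⟩ : ∃ u : Fin 2 → (Fin 1 ⊕ (Fin 2 ⊕ Fin n)) → ℝ, u =
    ![Pi.single (Sum.inr (Sum.inl 0)) 1,
      Pi.single (Sum.inr (Sum.inl 0)) (Real.cos ψ) +
        Pi.single (Sum.inr (Sum.inl 1)) (Real.sin ψ)] := ⟨_, rfl⟩
  obtain ⟨v, hv_def⟩ : ∃ v : Fin n → (Fin 1 ⊕ (Fin 2 ⊕ Fin n)) → ℝ, v =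
    fun y => Pi.single (Sum.inr (Sum.inl 0)) (D 0 y)
      + Pi.single (Sum.inr (Sum.inl 1)) (s y)
      + Pi.single (Sum.inr (Sum.inr y)) (ν y) := ⟨_, rfl⟩
  obtain ⟨V, hV_def⟩ : ∃ V : (Fin 1 ⊕ (Fin 2 ⊕ Fin n)) → (Fin 1 ⊕ (Fin 2 ⊕ Fin n)) → ℝ, V =
    Sum.elim (fun _ => Pi.single (Sum.inl 0) (1:ℝ))
      (Sum.elim
        (fun x => Pi.single (Sum.inl 0) (c x) + Real.sqrt (1 - c x ^ 2) • u x)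
        (fun y => Pi.single (Sum.inl 0) (d y) + Real.sqrt (1 - d y ^ 2) • v y)) := ⟨_, rfl⟩
  have hrc2 : ∀ x, Real.sqrt (1 - c x ^ 2) ^ 2 = 1 - c x ^ 2 :=
    fun x => Real.sq_sqrt (hc2 x).le
  have hrd2 : ∀ y, Real.sqrt (1 - d y ^ 2) ^ 2 = 1 - d y ^ 2 :=
    fun y => Real.sq_sqrt (hd2 y).le
  have hE : ∀ x y, c x * d y + Real.sqrt (1 - c x ^ 2) * Real.sqrt (1 - d y ^ 2) * D x y
      = e x y := by
    intro x y
    rw [hD x y, Real.sqrt_mul (hc2 x).le]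
    have h1 := (Real.sqrt_pos.mpr (hc2 x)).ne'
    have h2 := (Real.sqrt_pos.mpr (hd2 y)).ne'
    field_simp
    ring
  -- Gram entries
  have G00 : V (Sum.inl 0) ⬝ᵥ V (Sum.inl 0) = 1 := by
    rw [hV_def]; simp [sds]
  have G0A : ∀ x, V (Sum.inl 0) ⬝ᵥ V (Sum.inr (Sum.inl x)) = c x := by
    intro x
    rw [hV_def, hu_def]
    fin_cases x <;>
      simp [dotProduct_add, dotProduct_smul, sds, Pi.single_apply, Fin.ext_iff]
  have G0B : ∀ y, V (Sum.inl 0) ⬝ᵥ V (Sum.inr (Sum.inr y)) = d y := by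
    intro y
    rw [hV_def, hv_def]
    simp [dotProduct_add, dotProduct_smul, sds, Pi.single_apply]
  have GAA : ∀ x, V (Sum.inr (Sum.inl x)) ⬝ᵥ V (Sum.inr (Sum.inl x)) = 1 := by
    intro x
    rw [hV_def, hu_def]
    fin_cases x <;>
      (simp only [Sum.elim_inr, Sum.elim_inl, Matrix.cons_val_zero, Matrix.cons_val_one,
          Matrix.head_cons, dotProduct_add, add_dotProduct,
          dotProduct_smul, smul_dotProduct, sds, smul_eq_mul];
        simp [Pi.single_apply, Fin.ext_iff])
    · linear_combination hrc2 0
    · linear_combination hrc2 1 + Real.sqrt (1 - c 1 ^ 2) ^ 2 * Real.sin_sq_add_cos_sq ψ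
  have GAB : ∀ x y, V (Sum.inr (Sum.inl x)) ⬝ᵥ V (Sum.inr (Sum.inr y)) = e x y := by
    intro x y
    rw [hV_def, hu_def, hv_def]
    fin_cases x <;>
      (simp only [Sum.elim_inr, Sum.elim_inl, Matrix.cons_val_zero, Matrix.cons_val_one,
          Matrix.head_cons, dotProduct_add, add_dotProduct,
          dotProduct_smul, smul_dotProduct, sds, smul_eq_mul];
        simp [Pi.single_apply, Fin.ext_iff])
    · linear_combination hE 0 y
    · linear_combination hE 1 y + Real.sqrt (1 - c 1 ^ 2) * Real.sqrt (1 - d y ^ 2) * hs1 y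
  have GBB : ∀ y, V (Sum.inr (Sum.inr y)) ⬝ᵥ V (Sum.inr (Sum.inr y)) = 1 := by
    intro y
    rw [hV_def, hv_def]
    simp only [Sum.elim_inr, dotProduct_add, add_dotProduct,
      dotProduct_smul, smul_dotProduct, sds, smul_eq_mul]
    simp [Pi.single_apply, Fin.ext_iff]
    linear_combination hrd2 y + Real.sqrt (1 - d y ^ 2) ^ 2 * hν y
  -- assemble
  obtain ⟨Bm, hBm⟩ : ∃ Bm : Matrix (Fin 1 ⊕ (Fin 2 ⊕ Fin n)) (Fin 1 ⊕ (Fin 2 ⊕ Fin n)) ℝ,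
      Bm = Matrix.of (fun k i => V i k) := ⟨_, rfl⟩
  have hGram : ∀ i j, (Bmᴴ * Bm) i j = V i ⬝ᵥ V j := by
    intro i j
    rw [hBm]
    simp [Matrix.mul_apply, Matrix.conjTranspose_apply, dotProduct]
  refine ⟨V (Sum.inr (Sum.inl 0)) ⬝ᵥ V (Sum.inr (Sum.inl 1)),
    Matrix.of (fun y y' => V (Sum.inr (Sum.inr y)) ⬝ᵥ V (Sum.inr (Sum.inr y'))), ?_, ?_, ?_⟩
  · ext y y'
    simp [Matrix.transpose_apply, dotProduct_comm]
  · intro j; exact GBB j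
  · have hEq : (Matrix.fromBlocks (1 : Matrix (Fin 1) (Fin 1) ℝ)
        (Matrix.of fun (_ : Fin 1) (j : Fin 2 ⊕ Fin n) => Sum.elim c d j)
        (Matrix.of fun (i : Fin 2 ⊕ Fin n) (_ : Fin 1) => Sum.elim c d i)
        (Matrix.fromBlocks !![(1 : ℝ), V (Sum.inr (Sum.inl 0)) ⬝ᵥ V (Sum.inr (Sum.inl 1));
            V (Sum.inr (Sum.inl 0)) ⬝ᵥ V (Sum.inr (Sum.inl 1)), 1] e eᵀ
          (Matrix.of (fun y y' => V (Sum.inr (Sum.inr y)) ⬝ᵥ V (Sum.inr (Sum.inr y'))))))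
        = Bmᴴ * Bm := by
      ext i j
      rw [hGram]
      rcases i with i0 | ix
      · have : i0 = 0 := Subsingleton.elim _ _
        subst this
        rcases j with j0 | jx
        · have : j0 = 0 := Subsingleton.elim _ _
          subst this
          rw [G00]
          simp [Matrix.fromBlocks, Matrix.one_apply]
        · rcases jx with x | y
          · rw [G0A x]; simp [Matrix.fromBlocks]
          · rw [G0B y]; simp [Matrix.fromBlocks]
      · rcases j with j0 | jx
        · have : j0 = 0 := Subsingleton.elim _ _
          subst this
          rcases ix with x | y
          · rw [dotProduct_comm (V (Sum.inr (Sum.inl x))) (V (Sum.inl 0)), G0A x]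
            simp [Matrix.fromBlocks]
          · rw [dotProduct_comm (V (Sum.inr (Sum.inr y))) (V (Sum.inl 0)), G0B y]
            simp [Matrix.fromBlocks]
        · rcases ix with x | y <;> rcases jx with x' | y'
          · simp only [Matrix.fromBlocks, Matrix.of_apply, Sum.elim_inr, Sum.elim_inl]
            fin_cases x <;> fin_cases x'
            · simpa using (GAA 0).symm
            · simp
            · simpa using dotProduct_comm (V (Sum.inr (Sum.inl 0)))
                (V (Sum.inr (Sum.inl 1)))
            · simpa using (GAA 1).symm
          · rw [GAB x y']; simp [Matrix.fromBlocks]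
          · rw [dotProduct_comm (V (Sum.inr (Sum.inr y))) (V (Sum.inr (Sum.inl x'))),
              GAB x' y]
            simp [Matrix.fromBlocks]
          · simp [Matrix.fromBlocks]
    rw [hEq]
    exact Matrix.posSemidef_conjTranspose_mul_self Bm

/-- A certificate of order 1 (membership in `Q¹`) exists for correlations
`(c, d, e)` in the `2n22` scenario iff the four arcsine (CHSH-type)
inequalities hold for the normalized covariances `D`. -/
theorem stmt_11 (n : ℕ) (hn : 2 ≤ n) (c : Fin 2 → ℝ) (d : Fin n → ℝ)
    (hc : ∀ x, c x ∈ Set.Ioo (-1 : ℝ) 1) (hd : ∀ y, d y ∈ Set.Ioo (-1 : ℝ) 1)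
    (e : Matrix (Fin 2) (Fin n) ℝ) (D : Fin 2 → Fin n → ℝ)
    (hD : ∀ x y, D x y = (e x y - c x * d y) /
      Real.sqrt ((1 - c x ^ 2) * (1 - d y ^ 2)))
    (hDle : ∀ x y, |D x y| ≤ 1) :
    (∃ (t : ℝ) (Y : Matrix (Fin n) (Fin n) ℝ), Y.IsSymm ∧ (∀ j, Y j j = 1) ∧
      (Matrix.fromBlocks (1 : Matrix (Fin 1) (Fin 1) ℝ)
        (Matrix.of fun (_ : Fin 1) (j : Fin 2 ⊕ Fin n) => Sum.elim c d j)
        (Matrix.of fun (i : Fin 2 ⊕ Fin n) (_ : Fin 1) => Sum.elim c d i)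
        (Matrix.fromBlocks !![(1 : ℝ), t; t, 1] e eᵀ Y)).PosSemidef) ↔
    (∀ i j : Fin n,
      |Real.arcsin (D 0 i) + Real.arcsin (D 1 i) + Real.arcsin (D 0 j)
        - Real.arcsin (D 1 j)| ≤ Real.pi ∧
      |Real.arcsin (D 0 i) + Real.arcsin (D 1 i) - Real.arcsin (D 0 j)
        + Real.arcsin (D 1 j)| ≤ Real.pi ∧
      |Real.arcsin (D 0 i) - Real.arcsin (D 1 i) + Real.arcsin (D 0 j)
        + Real.arcsin (D 1 j)| ≤ Real.pi ∧
      |-Real.arcsin (D 0 i) + Real.arcsin (D 1 i) + Real.arcsin (D 0 j)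
        + Real.arcsin (D 1 j)| ≤ Real.pi) := by
  constructor
  · intro H i j
    have h := fwd n hn c d hc hd e D hD H
    have h1 := abs_le.mp (h i j).1
    have h2 := abs_le.mp (show |Real.arccos (D 0 i) - Real.arccos (D 1 i)|
        ≤ 2 * Real.pi - (Real.arccos (D 0 j) + Real.arccos (D 1 j)) by linarith [(h i j).2])
    have h3 := abs_le.mp (h j i).1
    have h4 := abs_le.mp (show |Real.arccos (D 0 j) - Real.arccos (D 1 j)|
        ≤ 2 * Real.pi - (Real.arccos (D 0 i) + Real.arccos (D 1 i)) by linarith [(h j i).2])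
    simp only [Real.arcsin_eq_pi_div_two_sub_arccos]
    refine ⟨?_, ?_, ?_, ?_⟩ <;> rw [abs_le] <;> constructor <;> linarith
  · intro R
    apply bwd n hn c d hc hd e D hD hDle
    intro i j
    simp only [Real.arcsin_eq_pi_div_two_sub_arccos] at R
    have I3 := abs_le.mp (R i j).2.2.1
    have I4 := abs_le.mp (R i j).2.2.2
    have g1 : |Real.arccos (D 0 i) - Real.arccos (D 1 i)|
        ≤ Real.arccos (D 0 j) + Real.arccos (D 1 j) :=
      abs_le.2 ⟨by linarith, by linarith⟩
    have g2 : |Real.arccos (D 0 i) - Real.arccos (D 1 i)|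
        ≤ 2 * Real.pi - (Real.arccos (D 0 j) + Real.arccos (D 1 j)) :=
      abs_le.2 ⟨by linarith, by linarith⟩
    exact ⟨g1, by linarith⟩
end
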